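/- arXiv:1104.3731 — 4 statements merged into one kernel-verified Lean document; each statement's English description precedes it below -/
import Mathlib

section
/- Fix integers d ≥ 1 and n ≥ 0 and a walk Y ∈ W_n. Then lim_{α→∞} (α e^{−α²})^{n+1−|Y|} ∏_{v∈range(Y)} J_{n_v(Y)}(α) = 1_{Y ∈ S_n} · π^{(n+1)/2}, where |Y| = #range(Y) is the number of distinct vertices visited by Y. -/
/-!
Formalization of statements from "The strong interaction limit of
continuous-time weakly self-avoiding walk" by Brydges, Dahlqvist, Slade.

An `n`-step nearest-neighbour walk on `ℤ^d` starting at the origin is encoded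
bijectively by its sequence of steps `s : Fin n → Fin d × Bool`, a step being a
coordinate direction together with a sign.
-/

open scoped BigOperators Topology
open Filter

namespace StrongInteraction

/-- The unit step in coordinate direction `e.1`, with sign `e.2`. -/
def stepVec (d : ℕ) (e : Fin d × Bool) : Fin d → ℤ :=
  fun i => if i = e.1 then (if e.2 then 1 else -1) else 0

/-- `walkPos s k` is the position `Y_k` of the walk started at the origin whose
successive nearest-neighbour steps are given by `s`. -/
def walkPos {d n : ℕ} (s : Fin n → Fin d × Bool) (k : Fin (n + 1)) : Fin d → ℤ :=
  ∑ i ∈ Finset.univ.filter (fun i : Fin n => (i : ℕ) < (k : ℕ)), stepVec d (s i)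

/-- `n_x(Y)`: the number of visits to `x` by the walk. -/
def visits {d n : ℕ} (s : Fin n → Fin d × Bool) (x : Fin d → ℤ) : ℕ :=
  (Finset.univ.filter (fun k : Fin (n + 1) => walkPos s k = x)).card

/-- The set of distinct vertices visited by the walk. -/
def walkRange {d n : ℕ} (s : Fin n → Fin d × Bool) : Finset (Fin d → ℤ) :=
  Finset.image (walkPos s) Finset.univ

/-- A walk is self-avoiding when its positions are pairwise distinct. -/
def SelfAvoiding {d n : ℕ} (s : Fin n → Fin d × Bool) : Prop :=
  Function.Injective (walkPos s)

instance {d n : ℕ} (s : Fin n → Fin d × Bool) : Decidable (SelfAvoiding s) :=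
  inferInstanceAs (Decidable (Function.Injective (walkPos s)))

/-- `c_n`: the number of `n`-step self-avoiding walks. -/
def csaw (d n : ℕ) : ℕ :=
  (Finset.univ.filter fun s : Fin n → Fin d × Bool => SelfAvoiding s).card


/-- `J_m(α) = ∫_{-α}^∞ ((1+u/α)^{m-1}/(m-1)!) e^{-u²} du`. -/
noncomputable def Jfun (α : ℝ) (m : ℕ) : ℝ :=
  ∫ u in Set.Ioi (-α), ((1 + u / α) ^ (m - 1) / (Nat.factorial (m - 1))) * Real.exp (-u ^ 2)


lemma jfun_tendsto (m : ℕ) :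
    Tendsto (fun α : ℝ => Jfun α m) atTop
      (𝓝 (Real.sqrt Real.pi / (Nat.factorial (m - 1)))) := by
  set k := m - 1 with hk
  set c : ℝ := (Nat.factorial k : ℝ) with hcdef
  have hc : 0 < c := by positivity
  have key : Tendsto (fun α : ℝ => ∫ u : ℝ,
      (Set.Ioi (-α)).indicator (fun u => (1 + u / α) ^ k / c * Real.exp (-u ^ 2)) u) atTop
      (𝓝 (∫ u : ℝ, 1 / c * Real.exp (-u ^ 2))) := by
    apply MeasureTheory.tendsto_integral_filter_of_dominated_convergence
      (fun u => Real.exp ((k : ℝ) ^ 2 / 2) / c * Real.exp (-(1/2) * u ^ 2))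
    · filter_upwards with α
      exact ((Continuous.aestronglyMeasurable (by continuity)).indicator measurableSet_Ioi)
    · filter_upwards [eventually_ge_atTop (1 : ℝ)] with α hα
      refine MeasureTheory.ae_of_all _ fun u => ?_
      by_cases hu : u ∈ Set.Ioi (-α)
      · rw [Set.indicator_of_mem hu]
        have hα0 : (0:ℝ) < α := by linarith
        have h1 : (0:ℝ) < 1 + u / α := by
          have : -1 < u / α := by
            rw [lt_div_iff₀ hα0]; simp only [Set.mem_Ioi] at hu; linarith
          linarith
        have h2 : 1 + u / α ≤ Real.exp |u| := by
          have hd : u / α ≤ |u| := by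
            calc u / α ≤ |u| / α := by gcongr; exact le_abs_self u
            _ ≤ |u| := div_le_self (abs_nonneg u) hα
          have := Real.add_one_le_exp |u|
          linarith
        rw [Real.norm_eq_abs, abs_of_nonneg (by positivity)]
        have h3 : (1 + u / α) ^ k ≤ Real.exp ((k : ℝ) * |u|) := by
          calc (1 + u / α) ^ k ≤ (Real.exp |u|) ^ k := pow_le_pow_left₀ h1.le h2 k
          _ = Real.exp ((k : ℝ) * |u|) := by rw [← Real.exp_nat_mul]
        calc (1 + u / α) ^ k / c * Real.exp (-u ^ 2)
            ≤ Real.exp ((k : ℝ) * |u|) / c * Real.exp (-u ^ 2) := by gcongr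
          _ = Real.exp ((k : ℝ) * |u| + -u ^ 2) / c := by rw [Real.exp_add]; ring
          _ ≤ Real.exp ((k : ℝ) ^ 2 / 2 + -(1/2) * u ^ 2) / c := by
              gcongr Real.exp ?_ / c
              nlinarith [sq_nonneg ((k : ℝ) - |u|), sq_abs u]
          _ = Real.exp ((k : ℝ) ^ 2 / 2) / c * Real.exp (-(1/2) * u ^ 2) := by
              rw [Real.exp_add]; ring
      · rw [Set.indicator_of_notMem hu]
        simp only [norm_zero]
        positivity
    · exact ((integrable_exp_neg_mul_sq (by norm_num : (0:ℝ) < 1/2)).const_mul _)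
    · refine MeasureTheory.ae_of_all _ fun u => ?_
      have hev : ∀ᶠ α : ℝ in atTop,
          (Set.Ioi (-α)).indicator (fun u => (1 + u / α) ^ k / c * Real.exp (-u ^ 2)) u
            = (1 + u / α) ^ k / c * Real.exp (-u ^ 2) := by
        filter_upwards [eventually_gt_atTop (-u)] with α hα
        exact Set.indicator_of_mem (by simpa [Set.mem_Ioi] using neg_lt_of_neg_lt hα) _
      have hdiv : Tendsto (fun α : ℝ => u / α) atTop (𝓝 0) :=
        Tendsto.div_atTop tendsto_const_nhds tendsto_id
      have := (((((tendsto_const_nhds (x := (1:ℝ))).add hdiv).pow k).div_const c).mul_const (Real.exp (-u ^ 2)))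
      simp only [add_zero, one_pow] at this
      exact (this.congr' (hev.mono fun α h => h.symm))
  have hJ : ∀ α : ℝ, Jfun α m = ∫ u : ℝ,
      (Set.Ioi (-α)).indicator (fun u => (1 + u / α) ^ k / c * Real.exp (-u ^ 2)) u := by
    intro α
    rw [MeasureTheory.integral_indicator measurableSet_Ioi]
    rfl
  have hval : (∫ u : ℝ, 1 / c * Real.exp (-u ^ 2)) = Real.sqrt Real.pi / c := by
    rw [MeasureTheory.integral_const_mul]
    have : (∫ u : ℝ, Real.exp (-u ^ 2)) = Real.sqrt Real.pi := by
      simpa using integral_gaussian 1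
    rw [this]; ring
  rw [← hval]
  exact key.congr (fun α => (hJ α).symm)

lemma card_walkRange_of_selfAvoiding {d n : ℕ} {s : Fin n → Fin d × Bool}
    (h : SelfAvoiding s) : (walkRange s).card = n + 1 := by
  rw [walkRange, Finset.card_image_of_injective _ h, Finset.card_univ, Fintype.card_fin]

lemma visits_eq_one {d n : ℕ} {s : Fin n → Fin d × Bool} (h : SelfAvoiding s)
    {v : Fin d → ℤ} (hv : v ∈ walkRange s) : visits s v = 1 := by
  obtain ⟨k, -, rfl⟩ := Finset.mem_image.mp hv
  have : Finset.univ.filter (fun j : Fin (n+1) => walkPos s j = walkPos s k) = {k} := by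
    ext j; simp [h.eq_iff]
  rw [visits, this, Finset.card_singleton]

lemma card_walkRange_lt {d n : ℕ} {s : Fin n → Fin d × Bool}
    (h : ¬ SelfAvoiding s) : (walkRange s).card < n + 1 := by
  refine lt_of_le_of_ne ?_ fun hc => h ?_
  · calc (walkRange s).card ≤ Finset.univ.card := Finset.card_image_le
    _ = n + 1 := by simp
  · have : Set.InjOn (walkPos s) (Finset.univ : Finset (Fin (n+1))) := by
      rw [← Finset.card_image_iff]
      simpa [Finset.card_univ, walkRange] using hc
    intro a b hab
    exact this (by simp) (by simp) hab

lemma tendsto_mul_exp_neg_sq : Tendsto (fun α : ℝ => α * Real.exp (-α ^ 2)) atTop (𝓝 0) := by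
  apply squeeze_zero' (g := fun α : ℝ => α * Real.exp (-α))
  · filter_upwards [eventually_ge_atTop (0 : ℝ)] with α hα
    positivity
  · filter_upwards [eventually_ge_atTop (1 : ℝ)] with α hα
    have : -α ^ 2 ≤ -α := by nlinarith
    have h2 := Real.exp_le_exp.mpr this
    nlinarith [Real.exp_pos (-α ^ 2)]
  · simpa using Real.tendsto_pow_mul_exp_neg_atTop_nhds_zero 1

/-- `(α e^{-α²})^{n+1-|Y|} ∏_{v∈range(Y)} J_{n_v}(α) → 1_{Y∈S_n} π^{(n+1)/2}`
as `α → ∞`, where `|Y|` is the number of distinct vertices visited by `Y`. -/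
theorem J_product_limit (d n : ℕ) (hd : 1 ≤ d) (s : Fin n → Fin d × Bool) :
    Tendsto (fun α : ℝ => (α * Real.exp (-α ^ 2)) ^ (n + 1 - (walkRange s).card) *
        ∏ v ∈ walkRange s, Jfun α (visits s v)) atTop
      (𝓝 (if SelfAvoiding s then Real.pi ^ (((n : ℝ) + 1) / 2) else 0)) := by
  by_cases hs : SelfAvoiding s
  · rw [if_pos hs]
    have hcard := card_walkRange_of_selfAvoiding hs
    have h1 : Tendsto (fun α : ℝ => Jfun α 1 ^ (n + 1)) atTop
        (𝓝 (Real.sqrt Real.pi ^ (n + 1))) := by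
      have := (jfun_tendsto 1).pow (n + 1)
      simpa using this
    have heq : Real.sqrt Real.pi ^ (n + 1) = Real.pi ^ (((n : ℝ) + 1) / 2) := by
      rw [Real.sqrt_eq_rpow, ← Real.rpow_natCast (Real.pi ^ ((1:ℝ)/2)) (n + 1),
        ← Real.rpow_mul Real.pi_nonneg]
      congr 1
      push_cast
      ring
    rw [← heq]
    refine h1.congr fun α => ?_
    rw [hcard, Nat.sub_self, pow_zero, one_mul,
      Finset.prod_congr rfl (fun v hv => by rw [visits_eq_one hs hv]),
      Finset.prod_const, hcard]
  · rw [if_neg hs]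
    have hprod := tendsto_finset_prod (f := fun v (α : ℝ) => Jfun α (visits s v))
      (a := fun v => Real.sqrt Real.pi / (Nat.factorial (visits s v - 1)))
      (walkRange s) (fun v _ => jfun_tendsto (visits s v))
    have hk : n + 1 - (walkRange s).card ≠ 0 :=
      Nat.sub_ne_zero_of_lt (card_walkRange_lt hs)
    have hpre := tendsto_mul_exp_neg_sq.pow (n + 1 - (walkRange s).card)
    rw [zero_pow hk] at hpre
    simpa using hpre.mul hprod


end StrongInteraction
end

section
/- For every g > 0, ρ ∈ ℝ, and integers m₁, m₂ ≥ 1, the function F_{g,ρ} is submultiplicative: F_{g,ρ}(m₁ + m₂) ≤ F_{g,ρ}(m₁)·F_{g,ρ}(m₂). -/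
/-!
Formalization of statements from "The strong interaction limit of
continuous-time weakly self-avoiding walk" by Brydges, Dahlqvist, Slade.

An `n`-step nearest-neighbour walk on `ℤ^d` starting at the origin is encoded
bijectively by its sequence of steps `s : Fin n → Fin d × Bool`, a step being a
coordinate direction together with a sign.
-/

open scoped BigOperators Topology
open Filter

namespace StrongInteraction

/-- `F_{g,ρ}(m) = ∫_0^∞ (s^{m-1}/(m-1)!) e^{-s - g s² + ρ s} ds`, the contribution
of a vertex visited `m` times, obtained from the Gamma(m,1) density of the sum of
`m` independent Exp(1) holding times. -/
noncomputable def F (g ρ : ℝ) (m : ℕ) : ℝ :=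
  ∫ t in Set.Ioi (0 : ℝ),
    (t ^ (m - 1) / (Nat.factorial (m - 1))) * Real.exp (-t - g * t ^ 2 + ρ * t)


open MeasureTheory Set


lemma betaAux (b : ℕ) : ∀ (a : ℕ) (u : ℝ),
    ∫ s in (0:ℝ)..u, s ^ a * (u - s) ^ b
      = (a.factorial : ℝ) * b.factorial / (a + b + 1).factorial * u ^ (a + b + 1) := by
  induction b with
  | zero =>
    intro a u
    have h1 : ((a.factorial : ℝ)) ≠ 0 := Nat.cast_ne_zero.2 a.factorial_ne_zero
    have h2 : ((a : ℝ) + 1) ≠ 0 := by positivity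
    simp only [pow_zero, mul_one, integral_pow, Nat.add_zero, Nat.factorial_succ,
      Nat.factorial_zero, Nat.cast_one, Nat.cast_mul, Nat.cast_add]
    rw [zero_pow (by omega : a + 1 ≠ 0)]
    field_simp
    ring
  | succ b ih =>
    intro a u
    have h2 : ((a : ℝ) + 1) ≠ 0 := by positivity
    have hu : ∀ x ∈ Set.uIcc (0:ℝ) u,
        HasDerivAt (fun s => (u - s) ^ (b + 1)) (((b : ℝ) + 1) * (u - x) ^ b * (-1)) x := by
      intro x _
      have := ((hasDerivAt_id x).const_sub u).pow (b + 1)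
      convert this using 1 <;> first | rfl | (ext s; rfl) | (push_cast; simp)
    have hv : ∀ x ∈ Set.uIcc (0:ℝ) u,
        HasDerivAt (fun s : ℝ => s ^ (a + 1) / ((a : ℝ) + 1)) (x ^ a) x := by
      intro x _
      have := (hasDerivAt_pow (a + 1) x).div_const ((a : ℝ) + 1)
      simpa [mul_div_assoc, mul_div_cancel_left₀ _ h2] using this
    have hu' : IntervalIntegrable (fun x : ℝ => ((b : ℝ) + 1) * (u - x) ^ b * (-1))
        volume 0 u := (by fun_prop : Continuous fun x : ℝ => ((b : ℝ) + 1) * (u - x) ^ b * (-1)).intervalIntegrable _ _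
    have hv' : IntervalIntegrable (fun x : ℝ => x ^ a) volume 0 u :=
      (continuous_pow a).intervalIntegrable _ _
    have ibp := intervalIntegral.integral_mul_deriv_eq_deriv_mul hu hv hu' hv'
    have lhs_eq : (∫ s in (0:ℝ)..u, s ^ a * (u - s) ^ (b + 1))
        = ∫ s in (0:ℝ)..u, (u - s) ^ (b + 1) * s ^ a := by
      apply intervalIntegral.integral_congr; intro x _; exact mul_comm _ _
    rw [lhs_eq, ibp]
    have rearr : ∀ x : ℝ, ((b : ℝ) + 1) * (u - x) ^ b * (-1) * (x ^ (a + 1) / ((a : ℝ) + 1))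
        = (-(((b : ℝ) + 1) / ((a : ℝ) + 1))) * (x ^ (a + 1) * (u - x) ^ b) := by
      intro x; ring
    simp only [rearr]
    rw [intervalIntegral.integral_const_mul, ih (a + 1) u]
    have he : a + 1 + b + 1 = a + (b + 1) + 1 := by omega
    rw [sub_self, zero_pow (by omega : b + 1 ≠ 0), zero_pow (by omega : a + 1 ≠ 0), he]
    have hfa : ((a.factorial : ℝ)) ≠ 0 := Nat.cast_ne_zero.2 a.factorial_ne_zero
    have hfb : ((b.factorial : ℝ)) ≠ 0 := Nat.cast_ne_zero.2 b.factorial_ne_zero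
    have hfs : (((a + (b + 1) + 1).factorial : ℝ)) ≠ 0 := Nat.cast_ne_zero.2 (Nat.factorial_ne_zero _)
    simp only [Nat.factorial_succ, Nat.cast_mul, Nat.cast_add, Nat.cast_one]
    field_simp
    ring


lemma expBound {g ρ : ℝ} (hg : 0 < g) (t : ℝ) :
    Real.exp (-t - g * t ^ 2 + ρ * t)
      ≤ Real.exp ((ρ - 1) ^ 2 / (2 * g)) * Real.exp (-(g / 2) * t ^ 2) := by
  rw [← Real.exp_add]
  apply Real.exp_le_exp.2
  have h : (ρ - 1) ^ 2 / (2 * g) * (2 * g) = (ρ - 1) ^ 2 :=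
    div_mul_cancel₀ _ (by positivity)
  nlinarith [sq_nonneg (g * t - (ρ - 1)), hg, sq_nonneg t]

lemma intOn {g ρ : ℝ} (hg : 0 < g) (n : ℕ) :
    IntegrableOn (fun t : ℝ => t ^ n * Real.exp (-t - g * t ^ 2 + ρ * t)) (Set.Ioi 0) := by
  have hmaj : IntegrableOn
      (fun t : ℝ => Real.exp ((ρ - 1) ^ 2 / (2 * g)) * (t ^ n * Real.exp (-(g / 2) * t ^ 2)))
      (Set.Ioi 0) := by
    have h := (integrableOn_rpow_mul_exp_neg_mul_sq (by positivity : (0:ℝ) < g / 2)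
      (lt_of_lt_of_le (by norm_num) (Nat.cast_nonneg n) : (-1:ℝ) < (n:ℝ)))
    have h' : IntegrableOn (fun t : ℝ => t ^ n * Real.exp (-(g / 2) * t ^ 2)) (Set.Ioi 0) := by
      simpa [Real.rpow_natCast] using h
    exact h'.const_mul _
  apply hmaj.mono' ((by fun_prop :
      Measurable fun t : ℝ => t ^ n * Real.exp (-t - g * t ^ 2 + ρ * t)).aestronglyMeasurable)
  filter_upwards [ae_restrict_mem measurableSet_Ioi] with t ht
  have htn : (0:ℝ) ≤ t ^ n := pow_nonneg (le_of_lt ht) n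
  rw [Real.norm_eq_abs, abs_of_nonneg (mul_nonneg htn (Real.exp_pos _).le)]
  rw [mul_left_comm]
  exact mul_le_mul_of_nonneg_left (expBound hg t) htn

lemma intOnF {g ρ : ℝ} (hg : 0 < g) (m : ℕ) :
    IntegrableOn (fun t : ℝ => t ^ (m - 1) / ((m - 1).factorial : ℝ)
      * Real.exp (-t - g * t ^ 2 + ρ * t)) (Set.Ioi 0) := by
  have h : (fun t : ℝ => t ^ (m - 1) / ((m - 1).factorial : ℝ)
      * Real.exp (-t - g * t ^ 2 + ρ * t))
      = fun t : ℝ => (1 / ((m - 1).factorial : ℝ))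
        * (t ^ (m - 1) * Real.exp (-t - g * t ^ 2 + ρ * t)) := by
    funext t; ring
  rw [h]
  exact (intOn hg (m - 1)).const_mul _

lemma Lkey {g ρ : ℝ} (hg : 0 < g) (a b : ℕ) :
    (∫⁻ u in Set.Ioi (0:ℝ), ENNReal.ofReal (u ^ (a + b + 1) / ((a + b + 1).factorial : ℝ) *
      Real.exp (-u - g * u ^ 2 + ρ * u)))
    ≤ (∫⁻ s in Set.Ioi (0:ℝ), ENNReal.ofReal (s ^ a / (a.factorial : ℝ) *
        Real.exp (-s - g * s ^ 2 + ρ * s))) *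
      (∫⁻ t in Set.Ioi (0:ℝ), ENNReal.ofReal (t ^ b / (b.factorial : ℝ) *
        Real.exp (-t - g * t ^ 2 + ρ * t))) := by
  set P : ℝ → ℝ := fun t => Real.exp (-t - g * t ^ 2 + ρ * t) with hPdef
  have hPm : Measurable P := by fun_prop
  have hPpos : ∀ t, 0 < P t := fun t => Real.exp_pos _
  have hfa : (0:ℝ) < (a.factorial : ℝ) := by exact_mod_cast a.factorial_pos
  have hfb : (0:ℝ) < (b.factorial : ℝ) := by exact_mod_cast b.factorial_pos
  set G : ℝ → ℝ → ENNReal := fun u s =>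
    ENNReal.ofReal (s ^ a * (u - s) ^ b / ((a.factorial : ℝ) * b.factorial) * P u) with hGdef
  have hGm : Measurable fun q : ℝ × ℝ => G q.1 q.2 := by
    apply ENNReal.measurable_ofReal.comp
    fun_prop
  have hGm1 : ∀ s : ℝ, Measurable fun u => G u s := fun s =>
    hGm.comp (measurable_id.prodMk measurable_const)
  -- Step 1
  have step1 : (∫⁻ u in Set.Ioi (0:ℝ), ENNReal.ofReal (u ^ (a + b + 1) /
      ((a + b + 1).factorial : ℝ) * P u)) = ∫⁻ u in Ioi (0:ℝ), ∫⁻ s in Ioo 0 u, G u s := by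
    apply setLIntegral_congr_fun measurableSet_Ioi
    intro u hu
    have hint : IntegrableOn
        (fun s : ℝ => s ^ a * (u - s) ^ b / ((a.factorial : ℝ) * b.factorial) * P u)
        (Ioo 0 u) := by
      apply ((by fun_prop : Continuous fun s : ℝ =>
        s ^ a * (u - s) ^ b / ((a.factorial : ℝ) * b.factorial) * P u).integrableOn_Icc
        (a := 0) (b := u)).mono_set Ioo_subset_Icc_self
    have hnn : 0 ≤ᵐ[volume.restrict (Ioo 0 u)]
        fun s : ℝ => s ^ a * (u - s) ^ b / ((a.factorial : ℝ) * b.factorial) * P u := by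
      filter_upwards [ae_restrict_mem measurableSet_Ioo] with s hs
      have h1 : (0:ℝ) ≤ s ^ a := pow_nonneg hs.1.le a
      have h2 : (0:ℝ) ≤ (u - s) ^ b := pow_nonneg (sub_nonneg.2 hs.2.le) b
      positivity
    have hreal : ∫ s in Ioo (0:ℝ) u,
        (s ^ a * (u - s) ^ b / ((a.factorial : ℝ) * b.factorial) * P u)
        = u ^ (a + b + 1) / ((a + b + 1).factorial : ℝ) * P u := by
      rw [← integral_Ioc_eq_integral_Ioo, ← intervalIntegral.integral_of_le (le_of_lt hu)]
      have rearr : ∀ s : ℝ, s ^ a * (u - s) ^ b / ((a.factorial : ℝ) * b.factorial) * P u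
          = (s ^ a * (u - s) ^ b) * (P u / ((a.factorial : ℝ) * b.factorial)) := fun s => by
        ring
      simp only [rearr]
      rw [intervalIntegral.integral_mul_const, betaAux b a u]
      have hfs : (0:ℝ) < ((a + b + 1).factorial : ℝ) := by exact_mod_cast (a+b+1).factorial_pos
      field_simp
    show ENNReal.ofReal _ = _
    rw [← hreal, ofReal_integral_eq_lintegral_ofReal hint hnn]
  -- Step 2: swap
  have step2 : (∫⁻ u in Ioi (0:ℝ), ∫⁻ s in Ioo 0 u, G u s)
      = ∫⁻ s in Ioi (0:ℝ), ∫⁻ u in Ioi s, G u s := by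
    have e1 : ∀ u : ℝ, (∫⁻ s in Ioo 0 u, G u s)
        = ∫⁻ s in Ioi (0:ℝ), (Iio u).indicator (fun s => G u s) s := by
      intro u
      rw [lintegral_indicator measurableSet_Iio, Measure.restrict_restrict measurableSet_Iio,
        Set.Iio_inter_Ioi]
    simp only [e1]
    have hswapmeas : AEMeasurable
        (Function.uncurry fun u s => (Iio u).indicator (fun s' => G u s') s)
        ((volume.restrict (Ioi (0:ℝ))).prod (volume.restrict (Ioi (0:ℝ)))) := by
      have heq : (Function.uncurry fun u s => (Iio u).indicator (fun s' => G u s') s)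
          = Set.indicator {q : ℝ × ℝ | q.2 < q.1} (fun q => G q.1 q.2) := by
        funext q
        simp [Function.uncurry, Set.indicator_apply, Set.mem_setOf_eq]
      rw [heq]
      exact (hGm.indicator (measurableSet_lt measurable_snd measurable_fst)).aemeasurable
    rw [lintegral_lintegral_swap hswapmeas]
    apply setLIntegral_congr_fun measurableSet_Ioi
    intro s hs
    have e2 : ∀ u : ℝ, (Iio u).indicator (fun s' => G u s') s
        = (Ioi s).indicator (fun u' => G u' s) u := by
      intro u
      by_cases h : s < u <;> simp [Set.indicator_apply, h]
    simp only [e2]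
    rw [lintegral_indicator measurableSet_Ioi, Measure.restrict_restrict measurableSet_Ioi,
      Set.inter_eq_self_of_subset_left (Set.Ioi_subset_Ioi hs.le)]
  -- Step 3: translation
  have step3 : ∀ s : ℝ, s ∈ Ioi (0:ℝ) → (∫⁻ u in Ioi s, G u s)
      = ∫⁻ t in Ioi (0:ℝ),
          ENNReal.ofReal (s ^ a * t ^ b / ((a.factorial : ℝ) * b.factorial) * P (t + s)) := by
    intro s _
    have hmap : Measure.map (fun t : ℝ => t + s) volume = volume :=
      MeasureTheory.map_add_right_eq_self volume s
    have hpre : (fun t : ℝ => t + s) ⁻¹' (Ioi s) = Ioi 0 := by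
      ext t; simp [lt_add_iff_pos_left]
    calc (∫⁻ u in Ioi s, G u s)
        = ∫⁻ u in Ioi s, G u s ∂(Measure.map (fun t : ℝ => t + s) volume) := by rw [hmap]
      _ = ∫⁻ t in (fun t : ℝ => t + s) ⁻¹' (Ioi s), G (t + s) s :=
          setLIntegral_map measurableSet_Ioi (hGm1 s) (measurable_add_const s)
      _ = ∫⁻ t in Ioi (0:ℝ),
            ENNReal.ofReal (s ^ a * t ^ b / ((a.factorial : ℝ) * b.factorial) * P (t + s)) := by
          rw [hpre]
          apply lintegral_congr
          intro t
          rw [hGdef]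
          simp [add_sub_cancel_right]
  -- Step 4: bound
  have step4 : ∀ s : ℝ, s ∈ Ioi (0:ℝ) →
      (∫⁻ t in Ioi (0:ℝ),
          ENNReal.ofReal (s ^ a * t ^ b / ((a.factorial : ℝ) * b.factorial) * P (t + s)))
        ≤ ENNReal.ofReal (s ^ a / (a.factorial : ℝ) * P s)
          * ∫⁻ t in Ioi (0:ℝ), ENNReal.ofReal (t ^ b / (b.factorial : ℝ) * P t) := by
    intro s hs
    have hs' : (0:ℝ) < s := hs
    have hfirst : (0:ℝ) ≤ s ^ a / (a.factorial : ℝ) * P s :=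
      mul_nonneg (div_nonneg (pow_nonneg hs'.le a) hfa.le) (hPpos s).le
    calc (∫⁻ t in Ioi (0:ℝ),
            ENNReal.ofReal (s ^ a * t ^ b / ((a.factorial : ℝ) * b.factorial) * P (t + s)))
        ≤ ∫⁻ t in Ioi (0:ℝ),
            ENNReal.ofReal ((s ^ a / (a.factorial : ℝ) * P s) * (t ^ b / (b.factorial : ℝ) * P t)) := by
          apply setLIntegral_mono
          · apply ENNReal.measurable_ofReal.comp; fun_prop
          · intro t ht
            apply ENNReal.ofReal_le_ofReal
            have hP : P (t + s) ≤ P s * P t := by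
              rw [hPdef]
              simp only
              rw [← Real.exp_add]
              apply Real.exp_le_exp.2
              nlinarith [mul_pos (mul_pos hg hs') (show (0:ℝ) < t from ht)]
            have hcoef : (0:ℝ) ≤ s ^ a * t ^ b / ((a.factorial : ℝ) * b.factorial) :=
              div_nonneg (mul_nonneg (pow_nonneg hs'.le a)
                (pow_nonneg (le_of_lt ht) b)) (by positivity)
            calc s ^ a * t ^ b / ((a.factorial : ℝ) * b.factorial) * P (t + s)
                ≤ s ^ a * t ^ b / ((a.factorial : ℝ) * b.factorial) * (P s * P t) :=
                  mul_le_mul_of_nonneg_left hP hcoef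
              _ = (s ^ a / (a.factorial : ℝ) * P s) * (t ^ b / (b.factorial : ℝ) * P t) := by
                  field_simp
      _ = ENNReal.ofReal (s ^ a / (a.factorial : ℝ) * P s)
          * ∫⁻ t in Ioi (0:ℝ), ENNReal.ofReal (t ^ b / (b.factorial : ℝ) * P t) := by
          have : ∀ t : ℝ, ENNReal.ofReal ((s ^ a / (a.factorial : ℝ) * P s)
              * (t ^ b / (b.factorial : ℝ) * P t))
              = ENNReal.ofReal (s ^ a / (a.factorial : ℝ) * P s)
                * ENNReal.ofReal (t ^ b / (b.factorial : ℝ) * P t) := fun t =>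
            ENNReal.ofReal_mul hfirst
          simp only [this]
          rw [lintegral_const_mul]
          apply ENNReal.measurable_ofReal.comp; fun_prop
  calc (∫⁻ u in Set.Ioi (0:ℝ), ENNReal.ofReal (u ^ (a + b + 1) /
        ((a + b + 1).factorial : ℝ) * P u))
      = ∫⁻ u in Ioi (0:ℝ), ∫⁻ s in Ioo 0 u, G u s := step1
    _ = ∫⁻ s in Ioi (0:ℝ), ∫⁻ u in Ioi s, G u s := step2
    _ = ∫⁻ s in Ioi (0:ℝ), ∫⁻ t in Ioi (0:ℝ),
          ENNReal.ofReal (s ^ a * t ^ b / ((a.factorial : ℝ) * b.factorial) * P (t + s)) :=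
        setLIntegral_congr_fun measurableSet_Ioi step3
    _ ≤ ∫⁻ s in Ioi (0:ℝ), ENNReal.ofReal (s ^ a / (a.factorial : ℝ) * P s)
          * ∫⁻ t in Ioi (0:ℝ), ENNReal.ofReal (t ^ b / (b.factorial : ℝ) * P t) := by
        apply lintegral_mono_ae
        filter_upwards [ae_restrict_mem measurableSet_Ioi] with s hs
        exact step4 s hs
    _ = (∫⁻ s in Ioi (0:ℝ), ENNReal.ofReal (s ^ a / (a.factorial : ℝ) * P s))
          * ∫⁻ t in Ioi (0:ℝ), ENNReal.ofReal (t ^ b / (b.factorial : ℝ) * P t) := by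
        rw [lintegral_mul_const]
        apply ENNReal.measurable_ofReal.comp; fun_prop


/-- submultiplicativity `F_{g,ρ}(m₁+m₂) ≤ F_{g,ρ}(m₁) F_{g,ρ}(m₂)`. -/
theorem F_submultiplicative (g ρ : ℝ) (hg : 0 < g) (m₁ m₂ : ℕ)
    (h₁ : 1 ≤ m₁) (h₂ : 1 ≤ m₂) :
    F g ρ (m₁ + m₂) ≤ F g ρ m₁ * F g ρ m₂ := by
  obtain ⟨a, rfl⟩ : ∃ a, m₁ = a + 1 := ⟨m₁ - 1, by omega⟩
  obtain ⟨b, rfl⟩ : ∃ b, m₂ = b + 1 := ⟨m₂ - 1, by omega⟩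
  have hnnae : ∀ m : ℕ, 0 ≤ᵐ[volume.restrict (Ioi (0:ℝ))]
      fun t : ℝ => t ^ (m - 1) / ((m - 1).factorial : ℝ) * Real.exp (-t - g * t ^ 2 + ρ * t) := by
    intro m
    filter_upwards [ae_restrict_mem measurableSet_Ioi] with t ht
    exact mul_nonneg (div_nonneg (pow_nonneg (le_of_lt ht) _) (Nat.cast_nonneg _))
      (Real.exp_pos _).le
  have hF : ∀ m : ℕ, ENNReal.ofReal (F g ρ m)
      = ∫⁻ t in Ioi (0:ℝ), ENNReal.ofReal
          (t ^ (m - 1) / ((m - 1).factorial : ℝ) * Real.exp (-t - g * t ^ 2 + ρ * t)) :=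
    fun m => ofReal_integral_eq_lintegral_ofReal (intOnF hg m) (hnnae m)
  have hFnn : ∀ m : ℕ, 0 ≤ F g ρ m := fun m =>
    integral_nonneg_of_ae (hnnae m)
  have key : ENNReal.ofReal (F g ρ (a + 1 + (b + 1)))
      ≤ ENNReal.ofReal (F g ρ (a + 1)) * ENNReal.ofReal (F g ρ (b + 1)) := by
    rw [hF, hF, hF]
    have e1 : a + 1 + (b + 1) - 1 = a + b + 1 := by omega
    have e2 : a + 1 - 1 = a := by omega
    have e3 : b + 1 - 1 = b := by omega
    rw [e1, e2, e3]
    exact Lkey hg a b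
  have fin : ENNReal.ofReal (F g ρ (a + 1)) * ENNReal.ofReal (F g ρ (b + 1)) ≠ ⊤ :=
    ENNReal.mul_ne_top ENNReal.ofReal_ne_top ENNReal.ofReal_ne_top
  have := ENNReal.toReal_mono fin key
  rwa [ENNReal.toReal_mul, ENNReal.toReal_ofReal (hFnn _), ENNReal.toReal_ofReal (hFnn _),
    ENNReal.toReal_ofReal (hFnn _)] at this

end StrongInteraction
end

section
/- Let (a_n)_{n≥0} be a sequence of positive real numbers satisfying the approximate subadditivity property a_{n+m} ≤ a_n · a_{m−1} for all integers n ≥ 1 and m ≥ 1. Then limsup_{n→∞} a_n^{1/n} = inf_{n≥1} a_n^{1/(n+1)}; in particular a_n ≥ (limsup_k a_k^{1/k})^{n+1} for all n ≥ 1. -/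
/-!
Formalization of statements from "The strong interaction limit of
continuous-time weakly self-avoiding walk" by Brydges, Dahlqvist, Slade.

An `n`-step nearest-neighbour walk on `ℤ^d` starting at the origin is encoded
bijectively by its sequence of steps `s : Fin n → Fin d × Bool`, a step being a
coordinate direction together with a sign.
-/

open scoped BigOperators Topology
open Filter

namespace StrongInteraction

private lemma tendsto_const_rpow_comp {x : ℝ} (hx : x ≠ 0) {e : ℕ → ℝ} {l : ℝ}
    (he : Tendsto e atTop (𝓝 l)) :
    Tendsto (fun k => x ^ (e k)) atTop (𝓝 (x ^ l)) :=
  (Real.continuousAt_const_rpow hx).tendsto.comp he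

private lemma tendsto_rpow_natInv {x : ℝ} (hx : 0 < x) :
    Tendsto (fun k : ℕ => x ^ ((k : ℝ)⁻¹)) atTop (𝓝 1) := by
  have h := tendsto_const_rpow_comp hx.ne' (tendsto_inv_atTop_nhds_zero_nat (𝕜 := ℝ))
  simpa using h

private lemma iterA (a : ℕ → ℝ) (hpos : ∀ n, 0 < a n)
    (hsub : ∀ n m : ℕ, 1 ≤ n → 1 ≤ m → a (n + m) ≤ a n * a (m - 1))
    {n : ℕ} (hn : 1 ≤ n) : ∀ q r : ℕ, a ((n + 1) * q + r) ≤ a n ^ q * a r := by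
  intro q
  induction q with
  | zero => intro r; simp
  | succ q ih =>
    intro r
    have h1 : (n + 1) * (q + 1) + r = n + ((n + 1) * q + r + 1) := by ring
    have h2 := hsub n ((n + 1) * q + r + 1) hn (Nat.le_add_left _ _)
    simp only [Nat.add_sub_cancel] at h2
    rw [h1]
    calc a (n + ((n + 1) * q + r + 1)) ≤ a n * a ((n + 1) * q + r) := h2
      _ ≤ a n * (a n ^ q * a r) := mul_le_mul_of_nonneg_left (ih r) (hpos n).le
      _ = a n ^ (q + 1) * a r := by ring

private lemma key (a : ℕ → ℝ) (hpos : ∀ n, 0 < a n)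
    (hsub : ∀ n m : ℕ, 1 ≤ n → 1 ≤ m → a (n + m) ≤ a n * a (m - 1))
    {n : ℕ} (hn : 1 ≤ n) :
    ∃ v : ℕ → ℝ, (∀ k, a k ^ ((k : ℝ)⁻¹) ≤ v k) ∧
      Tendsto v atTop (𝓝 (a n ^ (((n : ℝ) + 1)⁻¹))) := by
  set p := n + 1 with hp_def
  have hp0 : 0 < p := Nat.succ_pos n
  have hpR : (0 : ℝ) < p := by exact_mod_cast hp0
  have hc0 : 0 < a n := hpos n
  refine ⟨fun k => a n ^ (((k / p : ℕ) : ℝ) * (k : ℝ)⁻¹) * a (k % p) ^ ((k : ℝ)⁻¹), ?_, ?_⟩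
  · intro k
    have hak : a k ≤ a n ^ (k / p) * a (k % p) := by
      have h := iterA a hpos hsub hn (k / p) (k % p)
      rwa [Nat.div_add_mod] at h
    have h2 : a k ^ ((k : ℝ)⁻¹) ≤ (a n ^ (k / p) * a (k % p)) ^ ((k : ℝ)⁻¹) :=
      Real.rpow_le_rpow (hpos k).le hak (by positivity)
    rw [Real.mul_rpow (by positivity) (hpos _).le, ← Real.rpow_natCast (a n) (k / p),
      ← Real.rpow_mul hc0.le] at h2
    exact h2
  · have hq : Tendsto (fun k : ℕ => ((k / p : ℕ) : ℝ) * (k : ℝ)⁻¹) atTop (𝓝 ((p : ℝ)⁻¹)) := by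
      apply tendsto_of_tendsto_of_tendsto_of_le_of_le'
        (g := fun k : ℕ => (p : ℝ)⁻¹ - (k : ℝ)⁻¹) (h := fun _ : ℕ => (p : ℝ)⁻¹)
      · simpa using tendsto_const_nhds.sub (tendsto_inv_atTop_nhds_zero_nat (𝕜 := ℝ))
      · exact tendsto_const_nhds
      · filter_upwards [eventually_ge_atTop 1] with k hk
        have hkR : (0 : ℝ) < k := by exact_mod_cast hk
        have h5 : k < p * (k / p) + p := by
          calc k = p * (k / p) + k % p := (Nat.div_add_mod k p).symm
            _ < p * (k / p) + p := Nat.add_lt_add_left (Nat.mod_lt k hp0) _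
        have h6 : (k : ℝ) < (p : ℝ) * ((k / p : ℕ) : ℝ) + p := by exact_mod_cast h5
        set d : ℝ := ((k / p : ℕ) : ℝ) with hd
        have hlt : (k : ℝ) ≤ (d + 1) * p := by nlinarith
        have h3 : (p : ℝ)⁻¹ ≤ (d + 1) * (k : ℝ)⁻¹ := by
          rw [inv_eq_one_div, inv_eq_one_div, mul_one_div, div_le_div_iff₀ hpR hkR]
          linarith
        have h4 : (d + 1) * (k : ℝ)⁻¹ = d * (k : ℝ)⁻¹ + (k : ℝ)⁻¹ := by ring
        linarith
      · filter_upwards [eventually_ge_atTop 1] with k hk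
        have hkR : (0 : ℝ) < k := by exact_mod_cast hk
        have h5 : ((k / p : ℕ) : ℝ) * (p : ℝ) ≤ (k : ℝ) := by
          exact_mod_cast Nat.div_mul_le_self k p
        set d : ℝ := ((k / p : ℕ) : ℝ) with hd
        rw [show d * (k : ℝ)⁻¹ = d / (k : ℝ) from (div_eq_mul_inv d _),
          inv_eq_one_div, div_le_div_iff₀ hkR hpR]
        linarith
    have hne : (Finset.range p).Nonempty := ⟨0, Finset.mem_range.mpr hp0⟩
    have hSne : ((Finset.range p).image a).Nonempty := hne.image a
    set S := (Finset.range p).image a with hS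
    have hm0 : 0 < S.min' hSne := by
      obtain ⟨i, -, hi⟩ := Finset.mem_image.mp (S.min'_mem hSne)
      rw [← hi]; exact hpos i
    have hM0 : 0 < S.max' hSne := lt_of_lt_of_le hm0 (S.min'_le _ (S.max'_mem hSne))
    have hr_tend : Tendsto (fun k : ℕ => a (k % p) ^ ((k : ℝ)⁻¹)) atTop (𝓝 1) := by
      apply tendsto_of_tendsto_of_tendsto_of_le_of_le
        (tendsto_rpow_natInv hm0) (tendsto_rpow_natInv hM0)
      · intro k
        have hmem : a (k % p) ∈ S := Finset.mem_image_of_mem a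
          (Finset.mem_range.mpr (Nat.mod_lt k hp0))
        exact Real.rpow_le_rpow hm0.le (S.min'_le _ hmem) (by positivity)
      · intro k
        have hmem : a (k % p) ∈ S := Finset.mem_image_of_mem a
          (Finset.mem_range.mpr (Nat.mod_lt k hp0))
        exact Real.rpow_le_rpow (hpos _).le (S.le_max' _ hmem) (by positivity)
    have hfin := (tendsto_const_rpow_comp hc0.ne' hq).mul hr_tend
    have hcast : ((p : ℕ) : ℝ) = (n : ℝ) + 1 := by rw [hp_def]; push_cast; ring
    rw [mul_one, hcast] at hfin
    exact hfin

/-- a variant of Fekete's lemma for a positive sequence with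
`a_{n+m} ≤ a_n a_{m-1}`: `limsup_n a_n^{1/n} = inf_{n≥1} a_n^{1/(n+1)}`, and
`a_n ≥ (limsup_k a_k^{1/k})^{n+1}` for all `n ≥ 1`. -/
theorem fekete_variant (a : ℕ → ℝ) (hpos : ∀ n, 0 < a n)
    (hsub : ∀ n m : ℕ, 1 ≤ n → 1 ≤ m → a (n + m) ≤ a n * a (m - 1)) :
    (limsup (fun n : ℕ => a n ^ ((n : ℝ)⁻¹)) atTop
        = ⨅ n : ℕ, a (n + 1) ^ (((n : ℝ) + 2)⁻¹)) ∧
      ∀ n : ℕ, 1 ≤ n →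
        (limsup (fun k : ℕ => a k ^ ((k : ℝ)⁻¹)) atTop) ^ (n + 1) ≤ a n := by
  have hu_nonneg : ∀ k : ℕ, 0 ≤ a k ^ ((k : ℝ)⁻¹) := fun k => Real.rpow_nonneg (hpos k).le _
  obtain ⟨v1, hv1_le, hv1_tend⟩ := key a hpos hsub (le_refl 1)
  have hu_bdd : IsBoundedUnder (· ≤ ·) atTop (fun k : ℕ => a k ^ ((k : ℝ)⁻¹)) :=
    (hv1_tend.isBoundedUnder_le).mono_le (Eventually.of_forall hv1_le)
  have hu_cobdd : IsCoboundedUnder (· ≤ ·) atTop (fun k : ℕ => a k ^ ((k : ℝ)⁻¹)) :=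
    isCoboundedUnder_le_of_eventually_le atTop (x := 0) (Eventually.of_forall hu_nonneg)
  have hL0 : 0 ≤ limsup (fun k : ℕ => a k ^ ((k : ℝ)⁻¹)) atTop :=
    le_limsup_of_frequently_le (Frequently.of_forall hu_nonneg) hu_bdd
  have hmain : ∀ n : ℕ, 1 ≤ n →
      limsup (fun k : ℕ => a k ^ ((k : ℝ)⁻¹)) atTop ≤ a n ^ (((n : ℝ) + 1)⁻¹) := by
    intro n hn
    obtain ⟨v, hle, htend⟩ := key a hpos hsub hn
    calc limsup (fun k : ℕ => a k ^ ((k : ℝ)⁻¹)) atTop ≤ limsup v atTop :=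
          limsup_le_limsup (Eventually.of_forall hle) hu_cobdd htend.isBoundedUnder_le
      _ = _ := htend.limsup_eq
  have hpow : ∀ n : ℕ, 1 ≤ n → ∀ t : ℝ, 0 ≤ t → t ≤ a n ^ (((n : ℝ) + 1)⁻¹) →
      t ^ (n + 1) ≤ a n := by
    intro n hn t ht hle
    have h2 : t ^ (n + 1) ≤ (a n ^ (((n : ℝ) + 1)⁻¹)) ^ (n + 1) := pow_le_pow_left₀ ht hle (n + 1)
    have h3 : (a n ^ (((n : ℝ) + 1)⁻¹)) ^ (n + 1) = a n := by
      have hc : ((n : ℝ) + 1) = ((n + 1 : ℕ) : ℝ) := by push_cast; ring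
      rw [hc, Real.rpow_inv_natCast_pow (hpos n).le (Nat.succ_ne_zero n)]
    rwa [h3] at h2
  refine ⟨?_, fun n hn => hpow n hn _ hL0 (hmain n hn)⟩
  have hIbdd : BddBelow (Set.range fun n : ℕ => a (n + 1) ^ (((n : ℝ) + 2)⁻¹)) := by
    refine ⟨0, ?_⟩
    rintro x ⟨m, rfl⟩
    exact Real.rpow_nonneg (hpos _).le _
  refine le_antisymm ?_ ?_
  · apply le_ciInf
    intro m
    have h := hmain (m + 1) (Nat.le_add_left 1 m)
    have hc : (((m + 1 : ℕ) : ℝ) + 1)⁻¹ = ((m : ℝ) + 2)⁻¹ := by push_cast; ring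
    rwa [hc] at h
  · by_contra hlt
    push_neg at hlt
    set L := limsup (fun k : ℕ => a k ^ ((k : ℝ)⁻¹)) atTop with hL_def
    set I := ⨅ n : ℕ, a (n + 1) ^ (((n : ℝ) + 2)⁻¹) with hI_def
    set t := (L + I) / 2 with ht_def
    have hLt : L < t := by rw [ht_def]; linarith
    have htI : t < I := by rw [ht_def]; linarith
    have ht0 : 0 < t := lt_of_le_of_lt hL0 hLt
    have hbound : ∀ n : ℕ, 1 ≤ n → t ≤ a n ^ (((n : ℝ) + 1)⁻¹) := by
      intro n hn
      obtain ⟨m, rfl⟩ := Nat.exists_eq_add_of_le hn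
      have h1 : I ≤ a (m + 1) ^ (((m : ℝ) + 2)⁻¹) := ciInf_le hIbdd m
      rw [show (1 + m) = m + 1 from Nat.add_comm 1 m]
      have hc : (((m + 1 : ℕ) : ℝ) + 1)⁻¹ = ((m : ℝ) + 2)⁻¹ := by push_cast; ring
      rw [hc]
      exact le_trans htI.le h1
    have hw_tend : Tendsto (fun k : ℕ => t ^ (1 + (k : ℝ)⁻¹)) atTop (𝓝 t) := by
      have h := tendsto_const_rpow_comp ht0.ne'
        ((tendsto_const_nhds (x := (1 : ℝ))).add (tendsto_inv_atTop_nhds_zero_nat (𝕜 := ℝ)))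
      simpa using h
    have hw_le : ∀ᶠ k : ℕ in atTop, t ^ (1 + (k : ℝ)⁻¹) ≤ a k ^ ((k : ℝ)⁻¹) := by
      filter_upwards [eventually_ge_atTop 1] with k hk
      have hkR : (0 : ℝ) < k := by exact_mod_cast hk
      have h1 : t ^ (k + 1) ≤ a k := hpow k hk t ht0.le (hbound k hk)
      have h2 : (t ^ (k + 1)) ^ ((k : ℝ)⁻¹) ≤ a k ^ ((k : ℝ)⁻¹) :=
        Real.rpow_le_rpow (by positivity) h1 (by positivity)
      have h3 : (t ^ (k + 1)) ^ ((k : ℝ)⁻¹) = t ^ (1 + (k : ℝ)⁻¹) := by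
        rw [← Real.rpow_natCast t (k + 1), ← Real.rpow_mul ht0.le]
        congr 1
        push_cast
        field_simp
      rwa [h3] at h2
    have hfin : t ≤ L := by
      calc t = limsup (fun k : ℕ => t ^ (1 + (k : ℝ)⁻¹)) atTop := hw_tend.limsup_eq.symm
        _ ≤ L := limsup_le_limsup hw_le
            (hw_tend.isBoundedUnder_ge.isCoboundedUnder_le) hu_bdd
    linarith


end StrongInteraction
end

section
/- Fix an integer d ≥ 1, δ ∈ (0,1), and p ∈ (0,∞), and suppose ρ = ρ(g) is chosen so that α(g,ρ(g)) = (ρ(g)−1)/(2√g) → +∞ and g^{−1/2} e^{α(g,ρ(g))²} → p as g → ∞. Let z = (2d)^{−1}(1−δ) p √π and define μ(g,ρ) = limsup_{n→∞} w_n(g,ρ)^{1/n}. Then limsup_{g→∞} μ(g,ρ(g)) ≤ z·μ, where μ is the connective constant of the self-avoiding walk. -/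
/-!
Formalization of statements from "The strong interaction limit of
continuous-time weakly self-avoiding walk" by Brydges, Dahlqvist, Slade.

An `n`-step nearest-neighbour walk on `ℤ^d` starting at the origin is encoded
bijectively by its sequence of steps `s : Fin n → Fin d × Bool`, a step being a
coordinate direction together with a sign.
-/

open scoped BigOperators Topology
open Filter

namespace StrongInteraction

/-- `w_n(g,ρ)`: the total continuous-time weakly self-avoiding walk weight of
`n`-step walks, for killing rate `δ`. -/
noncomputable def wTot (d : ℕ) (δ : ℝ) (n : ℕ) (g ρ : ℝ) : ℝ :=
  ((1 - δ) / (2 * d)) ^ n *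
    ∑ s : Fin n → Fin d × Bool, ∏ v ∈ walkRange s, F g ρ (visits s v)

open MeasureTheory Real

lemma F_nonneg (g ρ : ℝ) (m : ℕ) : 0 ≤ F g ρ m := by
  apply MeasureTheory.setIntegral_nonneg measurableSet_Ioi
  intro t ht
  have : (0:ℝ) < t := ht
  positivity

lemma integrable_gauss {g : ℝ} (hg : 0 < g) (b : ℝ) :
    Integrable (fun t : ℝ => Real.exp (-g * t ^ 2 + b * t)) := by
  have h1 : Integrable (fun t : ℝ => Real.exp (-g * t ^ 2)) := integrable_exp_neg_mul_sq hg
  have h2 : Integrable (fun t : ℝ => Real.exp (-g * (t - b / (2 * g)) ^ 2)) :=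
    h1.comp_sub_right (b / (2 * g))
  have h3 := h2.const_mul (Real.exp (b ^ 2 / (4 * g)))
  refine h3.congr (Eventually.of_forall fun t => ?_)
  show Real.exp _ * Real.exp _ = Real.exp _
  rw [← Real.exp_add]
  congr 1
  field_simp
  ring

lemma integral_gauss_eq {g : ℝ} (hg : 0 < g) (b : ℝ) :
    (∫ t : ℝ, Real.exp (-g * t ^ 2 + b * t))
      = Real.sqrt (Real.pi / g) * Real.exp (b ^ 2 / (4 * g)) := by
  have h : ∀ t : ℝ, Real.exp (-g * t ^ 2 + b * t)
      = Real.exp (b ^ 2 / (4 * g)) * Real.exp (-g * (t - b / (2 * g)) ^ 2) := by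
    intro t
    rw [← Real.exp_add]
    congr 1
    field_simp
    ring
  simp_rw [h]
  rw [MeasureTheory.integral_const_mul,
    integral_sub_right_eq_self (fun t : ℝ => Real.exp (-g * t ^ 2)) (b / (2 * g)),
    integral_gaussian]
  ring

lemma integral_gauss_le {g : ℝ} (hg : 0 < g) (b : ℝ) :
    (∫ t in Set.Ioi (0:ℝ), Real.exp (-g * t ^ 2 + b * t))
      ≤ Real.sqrt (Real.pi / g) * Real.exp (b ^ 2 / (4 * g)) := by
  rw [← integral_gauss_eq hg b]
  exact setIntegral_le_integral (integrable_gauss hg b)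
    (Eventually.of_forall fun t => (Real.exp_pos _).le)

lemma F_one_eq (g ρ : ℝ) :
    F g ρ 1 = ∫ t in Set.Ioi (0:ℝ), Real.exp (-g * t ^ 2 + (ρ - 1) * t) := by
  unfold F
  refine setIntegral_congr_fun measurableSet_Ioi fun t _ => ?_
  have : -t - g * t ^ 2 + ρ * t = -g * t ^ 2 + (ρ - 1) * t := by ring
  simp [Nat.factorial, this]


lemma F_one_le {g ρ : ℝ} (hg : 0 < g) :
    F g ρ 1 ≤ Real.sqrt Real.pi * (Real.sqrt g)⁻¹
        * Real.exp (((ρ - 1) / (2 * Real.sqrt g)) ^ 2) := by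
  rw [F_one_eq]
  have h := integral_gauss_le hg (ρ - 1)
  have hsq : Real.sqrt (Real.pi / g) = Real.sqrt Real.pi * (Real.sqrt g)⁻¹ := by
    rw [Real.sqrt_div Real.pi_nonneg, div_eq_mul_inv]
  have hexp : (ρ - 1) ^ 2 / (4 * g) = ((ρ - 1) / (2 * Real.sqrt g)) ^ 2 := by
    rw [div_pow, mul_pow, Real.sq_sqrt (le_of_lt hg)]
    norm_num
  rw [hsq, hexp] at h
  exact h

lemma F_one_ge {g ρ : ℝ} (hg : 1 ≤ g) (hρ : 1 ≤ ρ) :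
    (Real.sqrt g)⁻¹ * Real.exp (((ρ - 1) / (2 * Real.sqrt g)) ^ 2 - 1) ≤ F g ρ 1 := by
  have hg0 : (0:ℝ) < g := lt_of_lt_of_le one_pos hg
  have hsg : (0:ℝ) < Real.sqrt g := Real.sqrt_pos.2 hg0
  set β : ℝ := (ρ - 1) / (2 * g) with hβ
  have hβ0 : 0 ≤ β := div_nonneg (by linarith) (by linarith)
  set α : ℝ := (ρ - 1) / (2 * Real.sqrt g) with hα
  have hsub : Set.Ioc β (β + (Real.sqrt g)⁻¹) ⊆ Set.Ioi (0:ℝ) := by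
    intro t ht
    exact lt_of_le_of_lt hβ0 ht.1
  have hint : IntegrableOn (fun t : ℝ => Real.exp (-g * t ^ 2 + (ρ - 1) * t))
      (Set.Ioi (0:ℝ)) := (integrable_gauss hg0 (ρ - 1)).integrableOn
  have h1 : (∫ t in Set.Ioc β (β + (Real.sqrt g)⁻¹),
        Real.exp (-g * t ^ 2 + (ρ - 1) * t))
      ≤ ∫ t in Set.Ioi (0:ℝ), Real.exp (-g * t ^ 2 + (ρ - 1) * t) := by
    apply setIntegral_mono_set hint
    · exact Eventually.of_forall fun t => (Real.exp_pos _).le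
    · exact HasSubset.Subset.eventuallyLE hsub
  have h2 : Real.exp (α ^ 2 - 1) * (volume (Set.Ioc β (β + (Real.sqrt g)⁻¹))).toReal
      ≤ ∫ t in Set.Ioc β (β + (Real.sqrt g)⁻¹), Real.exp (-g * t ^ 2 + (ρ - 1) * t) := by
    rw [mul_comm]; apply setIntegral_ge_of_const_le measurableSet_Ioc
    · exact (measure_Ioc_lt_top).ne
    · intro t ht
      apply Real.exp_le_exp.2
      have key : -g * t ^ 2 + (ρ - 1) * t = α ^ 2 - g * (t - β) ^ 2 := by
        rw [hα, hβ]
        rw [div_pow, mul_pow, Real.sq_sqrt (le_of_lt hg0)]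
        field_simp
        ring
      rw [key]
      have ht1 : 0 ≤ t - β := le_of_lt (sub_pos.2 ht.1)
      have ht2 : t - β ≤ (Real.sqrt g)⁻¹ := by
        have := ht.2; linarith
      have : g * (t - β) ^ 2 ≤ 1 := by
        have h3 : (t - β) ^ 2 ≤ ((Real.sqrt g)⁻¹) ^ 2 := by
          apply pow_le_pow_left₀ ht1 ht2
        calc g * (t - β) ^ 2 ≤ g * ((Real.sqrt g)⁻¹) ^ 2 := by
              apply mul_le_mul_of_nonneg_left h3 (le_of_lt hg0)
          _ = 1 := by
              rw [← Real.sq_sqrt (le_of_lt hg0)]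
              field_simp
              rw [Real.sqrt_sq (Real.sqrt_nonneg _)]
      linarith
    · exact hint.mono_set hsub
  have hvol : (volume (Set.Ioc β (β + (Real.sqrt g)⁻¹))).toReal = (Real.sqrt g)⁻¹ := by
    rw [Real.volume_Ioc]
    have : β + (Real.sqrt g)⁻¹ - β = (Real.sqrt g)⁻¹ := by ring
    rw [this, ENNReal.toReal_ofReal (by positivity)]
  rw [hvol] at h2
  rw [F_one_eq]
  calc (Real.sqrt g)⁻¹ * Real.exp (α ^ 2 - 1)
      = Real.exp (α ^ 2 - 1) * (Real.sqrt g)⁻¹ := by ring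
    _ ≤ _ := le_trans h2 h1


lemma F_le_main {g ρ : ℝ} (hg : 1 ≤ g) (hρ : 1 ≤ ρ) (m : ℕ) (hm : 1 ≤ m) :
    F g ρ m ≤ (F g ρ 1) ^ m *
      (Real.sqrt Real.pi *
        Real.exp (-((ρ - 1) / (2 * Real.sqrt g)) ^ 2
          + (ρ - 1) / (2 * Real.sqrt g) + 9/4)) ^ (m - 1) := by
  have hg0 : (0:ℝ) < g := lt_of_lt_of_le one_pos hg
  set sg : ℝ := Real.sqrt g with hsgdef
  have hsg1 : (1:ℝ) ≤ sg := by
    rw [hsgdef, show (1:ℝ) = Real.sqrt 1 by simp]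
    exact Real.sqrt_le_sqrt hg
  have hsg : (0:ℝ) < sg := lt_of_lt_of_le one_pos hsg1
  set α : ℝ := (ρ - 1) / (2 * sg) with hαdef
  have hα0 : 0 ≤ α := div_nonneg (by linarith) (by linarith)
  set γ : ℝ := Real.sqrt Real.pi * Real.exp (-α ^ 2 + α + 9/4) with hγdef
  have hπ1 : (1:ℝ) ≤ Real.sqrt Real.pi := by
    rw [show (1:ℝ) = Real.sqrt 1 by simp]
    exact Real.sqrt_le_sqrt (by linarith [Real.pi_gt_three])
  have hγ0 : 0 < γ := by positivity
  obtain ⟨k, rfl⟩ : ∃ k, m = k + 1 := ⟨m - 1, (Nat.succ_pred_eq_of_pos hm).symm⟩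
  rcases Nat.eq_zero_or_pos k with hk | hk
  · subst hk
    simp
  -- main case k ≥ 1
  set L : ℝ := sg⁻¹ * Real.exp (α ^ 2 - 1) with hLdef
  have hL0 : 0 < L := by positivity
  have hLF : L ≤ F g ρ 1 := F_one_ge hg hρ
  have hF1pos : 0 < F g ρ 1 := lt_of_lt_of_le hL0 hLF
  -- Step A
  have hb : (ρ - 1 + sg) ^ 2 / (4 * g) = (α + 1/2) ^ 2 := by
    rw [hαdef, ← Real.sq_sqrt (le_of_lt hg0), ← hsgdef]
    field_simp
    ring
  have hstepA : F g ρ (k + 1)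
      ≤ (sg⁻¹) ^ k * (Real.sqrt (Real.pi / g) * Real.exp ((α + 1/2) ^ 2)) := by
    have hint : Integrable (fun t : ℝ => (sg⁻¹) ^ k
        * Real.exp (-g * t ^ 2 + (ρ - 1 + sg) * t)) := by
      exact (integrable_gauss hg0 (ρ - 1 + sg)).const_mul _
    have h1 : F g ρ (k + 1) ≤ ∫ t in Set.Ioi (0:ℝ),
        (sg⁻¹) ^ k * Real.exp (-g * t ^ 2 + (ρ - 1 + sg) * t) := by
      unfold F
      apply MeasureTheory.integral_mono_of_nonneg
      · apply (MeasureTheory.ae_restrict_iff' measurableSet_Ioi).2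
        apply Eventually.of_forall
        intro t ht
        have ht0 : (0:ℝ) < t := ht
        positivity
      · exact hint.integrableOn
      · apply (MeasureTheory.ae_restrict_iff' measurableSet_Ioi).2
        apply Eventually.of_forall
        intro t ht
        have ht0 : (0:ℝ) < t := ht
        show t ^ (k + 1 - 1) / ((Nat.factorial (k + 1 - 1)) : ℝ) * Real.exp (-t - g * t ^ 2 + ρ * t) ≤ _
        simp only [Nat.add_sub_cancel]
        have hp : t ^ k / ((Nat.factorial k) : ℝ) ≤ (sg⁻¹) ^ k * Real.exp (sg * t) := by
          have h2 := Real.pow_div_factorial_le_exp (x := sg * t) (mul_nonneg hsg.le ht0.le) k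
          have h3 : t ^ k / ((Nat.factorial k) : ℝ) = (sg⁻¹) ^ k * ((sg * t) ^ k / ((Nat.factorial k) : ℝ)) := by
            rw [mul_pow]
            field_simp
            rw [← mul_pow, one_div, inv_mul_cancel₀ hsg.ne', one_pow]
          rw [h3]
          exact mul_le_mul_of_nonneg_left h2 (by positivity)
        calc t ^ k / ((Nat.factorial k) : ℝ) * Real.exp (-t - g * t ^ 2 + ρ * t)
            ≤ (sg⁻¹) ^ k * Real.exp (sg * t) * Real.exp (-t - g * t ^ 2 + ρ * t) := by
              exact mul_le_mul_of_nonneg_right hp (Real.exp_pos _).le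
          _ = (sg⁻¹) ^ k * Real.exp (-g * t ^ 2 + (ρ - 1 + sg) * t) := by
              rw [mul_assoc, ← Real.exp_add]
              congr 2
              ring
    rw [MeasureTheory.integral_const_mul] at h1
    refine h1.trans ?_
    apply mul_le_mul_of_nonneg_left _ (by positivity)
    have := integral_gauss_le hg0 (ρ - 1 + sg)
    rwa [hb] at this
  -- Step B
  have hsqpig : Real.sqrt (Real.pi / g) = Real.sqrt Real.pi * sg⁻¹ := by
    rw [Real.sqrt_div Real.pi_nonneg, div_eq_mul_inv, hsgdef]
  have hstepB : (sg⁻¹) ^ k * (Real.sqrt (Real.pi / g) * Real.exp ((α + 1/2) ^ 2))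
      ≤ L ^ (k + 1) * γ ^ k := by
    have hLγ : L ^ (k + 1) * γ ^ k
        = (sg⁻¹) ^ (k + 1) * ((Real.sqrt Real.pi) ^ k
            * Real.exp (((k:ℝ) + 1) * (α ^ 2 - 1) + (k : ℝ) * (-α ^ 2 + α + 9/4))) := by
      have e1 : L ^ (k + 1) = (sg⁻¹) ^ (k + 1) * Real.exp (((k:ℝ) + 1) * (α ^ 2 - 1)) := by
        rw [hLdef, mul_pow, ← Real.exp_nat_mul]
        push_cast
        ring_nf
      have e2 : γ ^ k = (Real.sqrt Real.pi) ^ k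
          * Real.exp ((k : ℝ) * (-α ^ 2 + α + 9/4)) := by
        rw [hγdef, mul_pow, ← Real.exp_nat_mul]
      rw [e1, e2, Real.exp_add]
      ring
    rw [hLγ, hsqpig]
    have hre : (sg⁻¹) ^ k * (Real.sqrt Real.pi * sg⁻¹ * Real.exp ((α + 1/2) ^ 2))
        = (sg⁻¹) ^ (k + 1) * (Real.sqrt Real.pi * Real.exp ((α + 1/2) ^ 2)) := by
      ring
    rw [hre]
    apply mul_le_mul_of_nonneg_left _ (by positivity)
    have hkr : (1:ℝ) ≤ (k:ℝ) := by exact_mod_cast hk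
    apply mul_le_mul
    · calc Real.sqrt Real.pi = (Real.sqrt Real.pi) ^ 1 := (pow_one _).symm
        _ ≤ (Real.sqrt Real.pi) ^ k := pow_le_pow_right₀ hπ1 hk
    · apply Real.exp_le_exp.2
      push_cast
      nlinarith
    · exact (Real.exp_pos _).le
    · positivity
  refine hstepA.trans (hstepB.trans ?_)
  simp only [Nat.add_sub_cancel]
  apply mul_le_mul_of_nonneg_right _ (by positivity)
  exact pow_le_pow_left₀ hL0.le hLF _


/-- A time is "new" if the walk has not visited its position before. -/
def newTime {d n : ℕ} (s : Fin n → Fin d × Bool) (k : Fin (n + 1)) : Prop :=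
  ∀ j, j < k → walkPos s j ≠ walkPos s k

instance {d n : ℕ} (s : Fin n → Fin d × Bool) (k : Fin (n + 1)) :
    Decidable (newTime s k) := by unfold newTime; infer_instance

/-- Number of repeat (non-new) times of the walk. -/
def rep {d n : ℕ} (s : Fin n → Fin d × Bool) : ℕ :=
  (Finset.univ.filter fun k : Fin (n + 1) => ¬ newTime s k).card

lemma newTime_zero {d n : ℕ} (s : Fin n → Fin d × Bool) (k : Fin (n+1)) (hk : k.1 = 0) :
    newTime s k := by
  intro j hj
  exact absurd hj (by simp [Fin.lt_def, hk])

/-- Subwalk position formula. -/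
lemma walkPos_sub {d n b : ℕ} (s : Fin n → Fin d × Bool) (a : ℕ) (hab : a + b ≤ n)
    (q : Fin b → Fin d × Bool) (hq : ∀ i : Fin b, q i = s ⟨a + i.1, by omega⟩)
    (k : Fin (b + 1)) (k' : Fin (n + 1)) (hk' : k'.1 = a + k.1) (a' : Fin (n+1)) (ha' : a'.1 = a) :
    walkPos q k = walkPos s k' - walkPos s a' := by
  have hsub : (Finset.univ.filter (fun i : Fin n => (i : ℕ) < a))
      ⊆ (Finset.univ.filter (fun i : Fin n => (i : ℕ) < (k' : ℕ))) := by
    intro i hi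
    simp only [Finset.mem_filter, Finset.mem_univ, true_and] at hi ⊢
    omega
  have hdiff : walkPos s k' - walkPos s a'
      = ∑ i ∈ (Finset.univ.filter (fun i : Fin n => (i : ℕ) < (k' : ℕ)))
          \ (Finset.univ.filter (fun i : Fin n => (i : ℕ) < a)), stepVec d (s i) := by
    unfold walkPos
    rw [ha']
    rw [sub_eq_iff_eq_add, Finset.sum_sdiff hsub]
  rw [hdiff]
  unfold walkPos
  refine Finset.sum_bij' (fun (i : Fin b) _ => (⟨a + i.1, by omega⟩ : Fin n))
    (fun (i : Fin n) hi => (⟨i.1 - a, by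
      simp only [Finset.mem_sdiff, Finset.mem_filter, Finset.mem_univ, true_and, not_lt] at hi
      have := k.isLt
      omega⟩ : Fin b)) ?_ ?_ ?_ ?_ ?_
  · intro i hi
    simp only [Finset.mem_filter, Finset.mem_univ, true_and] at hi ⊢
    simp only [Finset.mem_sdiff, Finset.mem_filter, Finset.mem_univ, true_and]
    omega
  · intro i hi
    simp only [Finset.mem_sdiff, Finset.mem_filter, Finset.mem_univ, true_and, not_lt] at hi
    simp only [Finset.mem_filter, Finset.mem_univ, true_and]
    omega
  · intro i hi
    apply Fin.ext
    simp
  · intro i hi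
    simp only [Finset.mem_sdiff, Finset.mem_filter, Finset.mem_univ, true_and, not_lt] at hi
    apply Fin.ext
    simp only
    omega
  · intro i hi
    rw [hq i]


lemma rep_eq_zero_of_sa {d n : ℕ} {s : Fin n → Fin d × Bool} (hs : SelfAvoiding s) :
    rep s = 0 := by
  unfold rep
  rw [Finset.card_eq_zero, Finset.filter_eq_empty_iff]
  intro k _
  rw [not_not]
  intro j hj
  exact fun h => (ne_of_lt hj) (hs h)

lemma card_walkRange_eq {d n : ℕ} (s : Fin n → Fin d × Bool) :
    (walkRange s).card = (Finset.univ.filter fun k : Fin (n+1) => newTime s k).card := by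
  symm
  apply Finset.card_bij (fun k _ => walkPos s k)
  · intro k _
    exact Finset.mem_image_of_mem _ (Finset.mem_univ k)
  · intro k1 h1 k2 h2 heq
    simp only [Finset.mem_filter, Finset.mem_univ, true_and] at h1 h2
    rcases lt_trichotomy k1 k2 with h | h | h
    · exact absurd heq (h2 k1 h)
    · exact h
    · exact absurd heq.symm (h1 k2 h)
  · intro v hv
    obtain ⟨k0, _, rfl⟩ := Finset.mem_image.1 hv
    set A := Finset.univ.filter (fun j : Fin (n+1) => walkPos s j = walkPos s k0) with hA
    have hne : A.Nonempty := ⟨k0, by simp [hA]⟩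
    refine ⟨A.min' hne, ?_, ?_⟩
    · have hmem := A.min'_mem hne
      simp only [hA, Finset.mem_filter, Finset.mem_univ, true_and] at hmem
      simp only [Finset.mem_filter, Finset.mem_univ, true_and]
      intro j hj heq
      have hjA : j ∈ A := by
        simp only [hA, Finset.mem_filter, Finset.mem_univ, true_and]
        rw [heq, hmem]
      have := A.min'_le j hjA
      exact absurd this (not_le.2 hj)
    · have hmem := A.min'_mem hne
      simp only [hA, Finset.mem_filter, Finset.mem_univ, true_and] at hmem
      exact hmem

lemma card_walkRange_add_rep {d n : ℕ} (s : Fin n → Fin d × Bool) :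
    (walkRange s).card + rep s = n + 1 := by
  rw [card_walkRange_eq, rep]
  rw [Finset.card_filter_add_card_filter_not]
  simp

lemma sum_visits {d n : ℕ} (s : Fin n → Fin d × Bool) :
    ∑ v ∈ walkRange s, visits s v = n + 1 := by
  have h := Finset.card_eq_sum_card_image (walkPos s) (Finset.univ : Finset (Fin (n+1)))
  simp only [Finset.card_univ, Fintype.card_fin] at h
  unfold walkRange visits
  omega

lemma visits_pos {d n : ℕ} {s : Fin n → Fin d × Bool} {v : Fin d → ℤ}
    (hv : v ∈ walkRange s) : 1 ≤ visits s v := by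
  obtain ⟨k, _, hk⟩ := Finset.mem_image.1 hv
  exact Finset.card_pos.2 ⟨k, by simp [hk]⟩

lemma prod_F_le {d n : ℕ} (s : Fin n → Fin d × Bool) (Fv : ℕ → ℝ) (F1 γ : ℝ)
    (hF0 : ∀ m, 0 ≤ Fv m) (hF1 : 0 ≤ F1) (hγ : 0 ≤ γ)
    (hF : ∀ m, 1 ≤ m → Fv m ≤ F1 ^ m * γ ^ (m - 1)) :
    ∏ v ∈ walkRange s, Fv (visits s v) ≤ F1 ^ (n + 1) * γ ^ rep s := by
  have h1 : ∏ v ∈ walkRange s, Fv (visits s v)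
      ≤ ∏ v ∈ walkRange s, (F1 ^ (visits s v) * γ ^ (visits s v - 1)) := by
    apply Finset.prod_le_prod
    · intro v _; exact hF0 _
    · intro v hv; exact hF _ (visits_pos hv)
  refine h1.trans ?_
  rw [Finset.prod_mul_distrib, Finset.prod_pow_eq_pow_sum, Finset.prod_pow_eq_pow_sum,
    sum_visits]
  have h2 : ∑ v ∈ walkRange s, (visits s v - 1) = rep s := by
    have h3 : ∑ v ∈ walkRange s, (visits s v - 1) + (walkRange s).card = n + 1 := by
      rw [← sum_visits s, Finset.card_eq_sum_ones, ← Finset.sum_add_distrib]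
      apply Finset.sum_congr rfl
      intro v hv
      have := visits_pos hv
      omega
    have h4 := card_walkRange_add_rep s
    omega
  rw [h2]


/-- weighted walk count -/
noncomputable def awt (d n : ℕ) (γ : ℝ) : ℝ :=
  ∑ s : Fin n → Fin d × Bool, γ ^ rep s

lemma exists_notNew {d n : ℕ} {s : Fin n → Fin d × Bool} (hs : ¬ SelfAvoiding s) :
    (Finset.univ.filter fun k : Fin (n+1) => ¬ newTime s k).Nonempty := by
  unfold SelfAvoiding Function.Injective at hs
  push_neg at hs
  obtain ⟨j, k, hjk, hne⟩ := hs
  rcases lt_trichotomy j k with h | h | h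
  · exact ⟨k, by
      simp only [Finset.mem_filter, Finset.mem_univ, true_and, newTime, not_forall]
      exact ⟨j, h, fun hcon => hcon hjk⟩⟩
  · exact absurd h hne
  · exact ⟨j, by
      simp only [Finset.mem_filter, Finset.mem_univ, true_and, newTime, not_forall]
      exact ⟨k, h, fun hcon => hcon hjk.symm⟩⟩

/-- First repeat time (junk value `0` for self-avoiding walks). -/
noncomputable def firstRep {d n : ℕ} (s : Fin n → Fin d × Bool) : Fin (n+1) :=
  if h : (Finset.univ.filter fun k : Fin (n+1) => ¬ newTime s k).Nonempty
    then (Finset.univ.filter fun k : Fin (n+1) => ¬ newTime s k).min' h else 0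

lemma firstRep_spec {d n : ℕ} {s : Fin n → Fin d × Bool} (hs : ¬ SelfAvoiding s) :
    ¬ newTime s (firstRep s) ∧ ∀ k : Fin (n+1), ¬ newTime s k → firstRep s ≤ k := by
  have hne := exists_notNew hs
  rw [firstRep, dif_pos hne]
  constructor
  · have := Finset.min'_mem _ hne
    simpa using this
  · intro k hk
    exact Finset.min'_le _ _ (by simpa using hk)

lemma firstRep_pos {d n : ℕ} {s : Fin n → Fin d × Bool} (hs : ¬ SelfAvoiding s) :
    1 ≤ (firstRep s).1 := by
  by_contra h
  have h0 : (firstRep s).1 = 0 := by omega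
  exact (firstRep_spec hs).1 (newTime_zero s _ h0)


def preW {d n : ℕ} (tn : ℕ) (h : tn ≤ n) (s : Fin n → Fin d × Bool) :
    Fin (tn - 1) → Fin d × Bool :=
  fun i => s ⟨i.1, by have := i.2; omega⟩

def sufW {d n : ℕ} (tn : ℕ) (h : tn ≤ n) (s : Fin n → Fin d × Bool) :
    Fin (n - tn) → Fin d × Bool :=
  fun i => s ⟨tn + i.1, by have := i.2; omega⟩

lemma walkPos_zero' {d n : ℕ} (s : Fin n → Fin d × Bool) (a : Fin (n+1)) (ha : a.1 = 0) :
    walkPos s a = 0 := by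
  unfold walkPos
  rw [Finset.filter_false_of_mem, Finset.sum_empty]
  intro i _
  omega

lemma walkPos_preW {d n tn : ℕ} (h : tn ≤ n) (s : Fin n → Fin d × Bool)
    (k : Fin (tn - 1 + 1)) (k' : Fin (n + 1)) (hk' : k'.1 = k.1) :
    walkPos (preW tn h s) k = walkPos s k' := by
  have h0 : (0:ℕ) + (tn - 1) ≤ n := by omega
  have hw := walkPos_sub s 0 h0 (preW tn h s)
    (fun i => by unfold preW; congr 1; apply Fin.ext; simp)
    k k' (by omega) ⟨0, by omega⟩ rfl
  rw [hw, walkPos_zero' s ⟨0, by omega⟩ rfl, sub_zero]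

lemma walkPos_sufW {d n tn : ℕ} (h : tn ≤ n) (s : Fin n → Fin d × Bool)
    (k : Fin (n - tn + 1)) (k' : Fin (n + 1)) (hk' : k'.1 = tn + k.1)
    (t' : Fin (n + 1)) (ht' : t'.1 = tn) :
    walkPos (sufW tn h s) k = walkPos s k' - walkPos s t' := by
  have h0 : tn + (n - tn) ≤ n := by omega
  exact walkPos_sub s tn h0 (sufW tn h s) (fun i => rfl) k k' hk' t' ht'

lemma pre_sa {d n : ℕ} {s : Fin n → Fin d × Bool} (hs : ¬ SelfAvoiding s)
    {tn : ℕ} (htn : tn ≤ n) (heq : (firstRep s).1 = tn) :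
    SelfAvoiding (preW tn htn s) := by
  intro k k' hkk
  have e1 := walkPos_preW htn s k ⟨k.1, by have := k.2; omega⟩ rfl
  have e2 := walkPos_preW htn s k' ⟨k'.1, by have := k'.2; omega⟩ rfl
  rw [e1, e2] at hkk
  by_contra hne
  have hne' : k.1 ≠ k'.1 := fun hc => hne (Fin.ext hc)
  have hkey : ∀ (u v : Fin (tn - 1 + 1)), u.1 < v.1 →
      walkPos s (⟨u.1, by have := u.2; omega⟩ : Fin (n+1))
        = walkPos s (⟨v.1, by have := v.2; omega⟩ : Fin (n+1)) → False := by
    intro u v huv hw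
    have hnnew : ¬ newTime s (⟨v.1, by have := v.2; omega⟩ : Fin (n+1)) := by
      intro hnew
      exact hnew ⟨u.1, by have := u.2; omega⟩ (by simp [Fin.lt_def, huv]) hw
    have hle := (firstRep_spec hs).2 _ hnnew
    have hle1 : (firstRep s).1 ≤ v.1 := Fin.le_def.mp hle
    have := v.2
    omega
  rcases Nat.lt_or_ge k.1 k'.1 with h | h
  · exact hkey k k' h hkk
  · exact hkey k' k (by omega) hkk.symm

lemma rep_suf {d n : ℕ} {s : Fin n → Fin d × Bool} (hs : ¬ SelfAvoiding s)
    {tn : ℕ} (htn : tn ≤ n) (heq : (firstRep s).1 = tn) :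
    rep (sufW tn htn s) + 1 ≤ rep s := by
  classical
  set t : Fin (n+1) := firstRep s with htdef
  set q := sufW tn htn s with hqdef
  have hmapsto : ∀ k : Fin (n - tn + 1), ¬ newTime q k →
      ¬ newTime s (⟨tn + k.1, by have := k.2; omega⟩ : Fin (n+1))
        ∧ 1 ≤ k.1 := by
    intro k hk
    unfold newTime at hk
    push_neg at hk
    obtain ⟨j, hj, hw⟩ := hk
    have hj1 : j.1 < k.1 := hj
    have e1 := walkPos_sufW htn s j ⟨tn + j.1, by have := j.2; omega⟩ rfl t heq
    have e2 := walkPos_sufW htn s k ⟨tn + k.1, by have := k.2; omega⟩ rfl t heq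
    rw [e1, e2, sub_left_inj] at hw
    constructor
    · intro hnew
      exact hnew ⟨tn + j.1, by have := j.2; omega⟩ (by simp only [Fin.lt_def]; omega) hw
    · omega
  have hcard : (Finset.univ.filter fun k : Fin (n - tn + 1) => ¬ newTime q k).card
      ≤ ((Finset.univ.filter fun k : Fin (n+1) => ¬ newTime s k).erase t).card := by
    apply Finset.card_le_card_of_injOn
      (fun k => (⟨tn + k.1, by have := k.2; omega⟩ : Fin (n+1)))
    · intro k hk
      simp only [Finset.mem_coe, Finset.mem_filter, Finset.mem_univ, true_and] at hk
      obtain ⟨hmem, hk1⟩ := hmapsto k hk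
      rw [Finset.mem_coe, Finset.mem_erase]
      refine ⟨?_, by simp only [Finset.mem_filter, Finset.mem_univ, true_and]; exact hmem⟩
      intro hcon
      have h2 : tn + k.1 = t.1 := congrArg Fin.val hcon
      omega
    · intro k1 _ k2 _ hkk
      apply Fin.ext
      have : tn + k1.1 = tn + k2.1 := congrArg Fin.val hkk
      omega
  have htmem : t ∈ Finset.univ.filter fun k : Fin (n+1) => ¬ newTime s k := by
    simp only [Finset.mem_filter, Finset.mem_univ, true_and]
    exact (firstRep_spec hs).1
  rw [Finset.card_erase_of_mem htmem] at hcard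
  have hpos : 1 ≤ (Finset.univ.filter fun k : Fin (n+1) => ¬ newTime s k).card :=
    Finset.card_pos.2 ⟨t, htmem⟩
  unfold rep
  omega


lemma awt_nonneg {d n : ℕ} {γ : ℝ} (hγ0 : 0 ≤ γ) : 0 ≤ awt d n γ :=
  Finset.sum_nonneg fun s _ => pow_nonneg hγ0 _

lemma fiber_le {d n : ℕ} {γ : ℝ} (hγ0 : 0 ≤ γ) (hγ1 : γ ≤ 1)
    (t : Fin (n+1)) (ht1 : 1 ≤ t.1) :
    ∑ s ∈ ((Finset.univ.filter fun s : Fin n → Fin d × Bool => ¬ SelfAvoiding s).filter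
        fun s => firstRep s = t), γ ^ rep s
      ≤ γ * (2 * (d:ℝ) * (csaw d (t.1 - 1) : ℝ) * awt d (n - t.1) γ) := by
  classical
  have htle : t.1 ≤ n := by have := t.isLt; omega
  set tn := t.1 with htn
  set S := ((Finset.univ.filter fun s : Fin n → Fin d × Bool => ¬ SelfAvoiding s).filter
      fun s => firstRep s = t) with hS
  set Φ : (Fin n → Fin d × Bool) →
      (Fin (tn - 1) → Fin d × Bool) × ((Fin d × Bool) × (Fin (n - tn) → Fin d × Bool)) :=
    fun s => (preW tn htle s, (s ⟨tn - 1, by omega⟩, sufW tn htle s)) with hΦ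
  have hΦinj : Function.Injective Φ := by
    intro s s' h
    have h1 : preW tn htle s = preW tn htle s' := congrArg Prod.fst h
    have h2 : s ⟨tn - 1, by omega⟩ = s' ⟨tn - 1, by omega⟩ :=
      congrArg (Prod.fst ∘ Prod.snd) h
    have h3 : sufW tn htle s = sufW tn htle s' := congrArg (Prod.snd ∘ Prod.snd) h
    funext j
    rcases Nat.lt_or_ge j.1 (tn - 1) with hj | hj
    · have := congrFun h1 ⟨j.1, hj⟩
      unfold preW at this
      simpa using this
    · rcases Nat.lt_or_ge j.1 tn with hj2 | hj2
      · have hjeq : j = (⟨tn - 1, by omega⟩ : Fin n) := Fin.ext (show j.1 = tn - 1 by omega)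
        rw [hjeq]
        exact h2
      · have := congrFun h3 ⟨j.1 - tn, by have := j.2; omega⟩
        unfold sufW at this
        simp only at this
        have hval : (⟨tn + (j.1 - tn), by have := j.2; omega⟩ : Fin n) = j :=
          Fin.ext (show tn + (j.1 - tn) = j.1 by omega)
        rwa [hval] at this
  set h : (Fin (tn - 1) → Fin d × Bool) × ((Fin d × Bool) × (Fin (n - tn) → Fin d × Bool)) → ℝ :=
    fun y => (if SelfAvoiding y.1 then (1:ℝ) else 0) * γ ^ rep y.2.2 with hh
  have hstep1 : ∑ s ∈ S, γ ^ rep s ≤ ∑ s ∈ S, γ * h (Φ s) := by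
    apply Finset.sum_le_sum
    intro s hsS
    simp only [hS, Finset.mem_filter, Finset.mem_univ, true_and] at hsS
    obtain ⟨hnsa, hft⟩ := hsS
    have heq : (firstRep s).1 = tn := by rw [hft]
    have hpre : SelfAvoiding (preW tn htle s) := pre_sa hnsa htle heq
    have hsufrep : rep (sufW tn htle s) + 1 ≤ rep s := rep_suf hnsa htle heq
    have : h (Φ s) = γ ^ rep (sufW tn htle s) := by
      simp only [hh, hΦ, if_pos hpre, one_mul]
    rw [this]
    calc γ ^ rep s ≤ γ ^ (rep (sufW tn htle s) + 1) :=
          pow_le_pow_of_le_one hγ0 hγ1 hsufrep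
      _ = γ * γ ^ rep (sufW tn htle s) := by ring
  have hstep2 : ∑ s ∈ S, γ * h (Φ s) = γ * ∑ s ∈ S, h (Φ s) := by
    rw [Finset.mul_sum]
  have hstep3 : ∑ s ∈ S, h (Φ s) ≤ ∑ y, h y := by
    rw [← Finset.sum_image (fun x _ y _ hxy => hΦinj hxy)]
    apply Finset.sum_le_sum_of_subset_of_nonneg (Finset.subset_univ _)
    intro y _ _
    simp only [hh]
    apply mul_nonneg
    · split_ifs <;> norm_num
    · exact pow_nonneg hγ0 _
  have hA : ∑ z : (Fin d × Bool) × (Fin (n - tn) → Fin d × Bool), γ ^ rep z.2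
      = 2 * (d:ℝ) * awt d (n - tn) γ := by
    rw [Fintype.sum_prod_type]
    show (∑ _x : Fin d × Bool, ∑ y : Fin (n - tn) → Fin d × Bool, γ ^ rep y) = _
    rw [Finset.sum_const, Finset.card_univ, Fintype.card_prod, Fintype.card_fin,
      Fintype.card_bool, nsmul_eq_mul, awt]
    push_cast
    ring
  have hstep4 : ∑ y, h y = (csaw d (tn - 1) : ℝ) * (2 * (d:ℝ) * awt d (n - tn) γ) := by
    rw [Fintype.sum_prod_type]
    simp only [hh]
    have e1 : ∀ x : Fin (tn - 1) → Fin d × Bool,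
        (∑ z : (Fin d × Bool) × (Fin (n - tn) → Fin d × Bool),
          (if SelfAvoiding x then (1:ℝ) else 0) * γ ^ rep z.2)
        = (if SelfAvoiding x then (1:ℝ) else 0) * (2 * (d:ℝ) * awt d (n - tn) γ) := by
      intro x
      rw [← Finset.mul_sum, hA]
    rw [Finset.sum_congr rfl fun x _ => e1 x, ← Finset.sum_mul, Finset.sum_boole, csaw]
  calc ∑ s ∈ S, γ ^ rep s ≤ γ * ∑ s ∈ S, h (Φ s) := by rw [← hstep2]; exact hstep1
    _ ≤ γ * ((csaw d (tn - 1) : ℝ) * (2 * (d:ℝ) * awt d (n - tn) γ)) := by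
        rw [← hstep4]
        exact mul_le_mul_of_nonneg_left hstep3 hγ0
    _ = γ * (2 * (d:ℝ) * (csaw d (tn - 1) : ℝ) * awt d (n - tn) γ) := by ring


lemma awt_rec {d n : ℕ} {γ : ℝ} (hγ0 : 0 ≤ γ) (hγ1 : γ ≤ 1) :
    awt d n γ ≤ (csaw d n : ℝ)
      + ∑ m ∈ Finset.Icc 1 n, γ * (2 * (d:ℝ) * (csaw d (m - 1) : ℝ) * awt d (n - m) γ) := by
  classical
  rw [awt, ← Finset.sum_filter_add_sum_filter_not Finset.univ SelfAvoiding]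
  have hsa : ∑ s ∈ Finset.univ.filter (fun s : Fin n → Fin d × Bool => SelfAvoiding s),
      γ ^ rep s = (csaw d n : ℝ) := by
    rw [Finset.sum_congr rfl (fun s hs => ?_), Finset.sum_const, nsmul_eq_mul, mul_one, csaw]
    rw [rep_eq_zero_of_sa (Finset.mem_filter.1 hs).2, pow_zero]
  rw [hsa]
  apply add_le_add_right
  set NS := Finset.univ.filter (fun s : Fin n → Fin d × Bool => ¬ SelfAvoiding s) with hNS
  have hfib : ∑ s ∈ NS, γ ^ rep s
      = ∑ t : Fin (n+1), ∑ s ∈ NS.filter (fun s => firstRep s = t), γ ^ rep s :=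
    (Finset.sum_fiberwise_of_maps_to (fun s _ => Finset.mem_univ _) _).symm
  rw [hfib]
  have hbd : ∀ t : Fin (n+1), ∑ s ∈ NS.filter (fun s => firstRep s = t), γ ^ rep s
      ≤ (if 1 ≤ t.1 then γ * (2 * (d:ℝ) * (csaw d (t.1 - 1) : ℝ) * awt d (n - t.1) γ)
          else 0) := by
    intro t
    by_cases ht : 1 ≤ t.1
    · rw [if_pos ht]
      exact fiber_le hγ0 hγ1 t ht
    · rw [if_neg ht]
      have hempty : NS.filter (fun s => firstRep s = t) = ∅ := by
        apply Finset.eq_empty_of_forall_notMem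
        intro s hs
        simp only [hNS, Finset.mem_filter, Finset.mem_univ, true_and] at hs
        have := firstRep_pos hs.1
        rw [hs.2] at this
        omega
      rw [hempty, Finset.sum_empty]
  refine (Finset.sum_le_sum (fun t _ => hbd t)).trans ?_
  rw [Fin.sum_univ_eq_sum_range
    (fun m => if 1 ≤ m then γ * (2 * (d:ℝ) * (csaw d (m - 1) : ℝ) * awt d (n - m) γ) else 0)]
  rw [← Finset.sum_filter]
  apply le_of_eq
  apply Finset.sum_congr
  · ext a
    simp only [Finset.mem_filter, Finset.mem_range, Finset.mem_Icc]
    omega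
  · intro m _
    rfl

lemma awt_le {d : ℕ} {γ C M x : ℝ} (hγ0 : 0 ≤ γ) (hγ1 : γ ≤ 1)
    (hC : 1 ≤ C) (hM : 0 < M) (hx : 0 < x) (hMx : M * x < 1)
    (hcs : ∀ m : ℕ, (csaw d m : ℝ) ≤ C * M ^ m)
    (hγ2 : γ * (2 * (d:ℝ)) * C * x ≤ (1 - M * x) / 2) :
    ∀ n, awt d n γ ≤ 2 * C * (x⁻¹) ^ n := by
  intro n
  induction n using Nat.strong_induction_on with
  | _ n ih =>
    have hx1 : 0 < x⁻¹ := inv_pos.2 hx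
    have hMle : M ≤ x⁻¹ := by
      rw [← one_div, le_div_iff₀ hx]
      linarith
    refine (awt_rec hγ0 hγ1).trans ?_
    have hterm : ∀ m ∈ Finset.Icc 1 n,
        γ * (2 * (d:ℝ) * (csaw d (m - 1) : ℝ) * awt d (n - m) γ)
          ≤ γ * (2 * (d:ℝ) * (C * M ^ (m - 1)) * (2 * C * (x⁻¹) ^ (n - m))) := by
      intro m hm
      rw [Finset.mem_Icc] at hm
      have hrec : awt d (n - m) γ ≤ 2 * C * (x⁻¹) ^ (n - m) := ih _ (by omega)
      apply mul_le_mul_of_nonneg_left _ hγ0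
      apply mul_le_mul
      · exact mul_le_mul_of_nonneg_left (hcs (m-1)) (by positivity)
      · exact hrec
      · exact awt_nonneg hγ0
      · positivity
    refine (add_le_add (hcs n) (Finset.sum_le_sum hterm)).trans ?_
    have hsum : ∑ m ∈ Finset.Icc 1 n,
        γ * (2 * (d:ℝ) * (C * M ^ (m - 1)) * (2 * C * (x⁻¹) ^ (n - m)))
        = (γ * (2 * (d:ℝ)) * C * (2 * C)) * ((x⁻¹) ^ n
            * ∑ m ∈ Finset.Icc 1 n, (M * x) ^ (m - 1) * x) := by
      rw [Finset.mul_sum, Finset.mul_sum]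
      apply Finset.sum_congr rfl
      intro m hm
      rw [Finset.mem_Icc] at hm
      have hxne : x ≠ 0 := ne_of_gt hx
      have hxm : (x⁻¹) ^ (n - m) = (x⁻¹) ^ n * x ^ m := by
        have h0 : x⁻¹ ^ (n - m) * x⁻¹ ^ m = x⁻¹ ^ n := by
          rw [← pow_add]
          congr 1
          omega
        have h1 : x⁻¹ ^ m * x ^ m = 1 := by
          rw [← mul_pow, inv_mul_cancel₀ hxne, one_pow]
        calc x⁻¹ ^ (n - m) = x⁻¹ ^ (n - m) * (x⁻¹ ^ m * x ^ m) := by rw [h1, mul_one]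
          _ = (x⁻¹ ^ (n - m) * x⁻¹ ^ m) * x ^ m := by ring
          _ = x⁻¹ ^ n * x ^ m := by rw [h0]
      rw [hxm, mul_pow]
      have hxm2 : x ^ m = x ^ (m - 1) * x := by
        rw [← pow_succ]
        congr 1
        omega
      rw [hxm2]
      ring
    rw [hsum]
    have hgeom : ∑ m ∈ Finset.Icc 1 n, (M * x) ^ (m - 1) * x ≤ x / (1 - M * x) := by
      rw [← Finset.sum_mul]
      have h1 : ∑ m ∈ Finset.Icc 1 n, (M * x) ^ (m - 1) = ∑ j ∈ Finset.range n, (M * x) ^ j := by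
        apply Finset.sum_nbij' (fun m => m - 1) (fun j => j + 1)
        · intro a ha
          rw [Finset.mem_Icc] at ha
          rw [Finset.mem_range]
          omega
        · intro a ha
          rw [Finset.mem_range] at ha
          rw [Finset.mem_Icc]
          omega
        · intro a ha
          rw [Finset.mem_Icc] at ha
          omega
        · intro a _
          omega
        · intro a _
          rfl
      rw [h1]
      have hMx0 : 0 ≤ M * x := by positivity
      have h1r : 0 < 1 - M * x := by linarith
      have h2 : ∑ j ∈ Finset.range n, (M * x) ^ j ≤ 1 / (1 - M * x) := by
        rw [geom_sum_eq (ne_of_lt hMx) n]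
        have e : ((M * x) ^ n - 1) / ((M * x) - 1) = (1 - (M * x) ^ n) / (1 - (M * x)) := by
          rw [← neg_div_neg_eq]
          ring_nf
        rw [e]
        have hpw : (0:ℝ) ≤ (M * x) ^ n := by positivity
        apply (div_le_div_iff_of_pos_right h1r).2
        linarith
      calc (∑ j ∈ Finset.range n, (M * x) ^ j) * x ≤ (1 / (1 - M * x)) * x := by
            apply mul_le_mul_of_nonneg_right h2 hx.le
        _ = x / (1 - M * x) := by ring
    have hA : (0:ℝ) ≤ γ * (2 * (d:ℝ)) * C * (2 * C) := by positivity
    have hfinal2 : (γ * (2 * (d:ℝ)) * C * (2 * C)) * ((x⁻¹) ^ n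
          * ∑ m ∈ Finset.Icc 1 n, (M * x) ^ (m - 1) * x)
        ≤ C * (x⁻¹) ^ n := by
      have h1r : 0 < 1 - M * x := by linarith
      have h3 : (γ * (2 * (d:ℝ)) * C * (2 * C)) * (x / (1 - M * x)) ≤ C := by
        have e : (γ * (2 * (d:ℝ)) * C * (2 * C)) * (x / (1 - M * x))
            = (γ * (2 * (d:ℝ)) * C * x) * (2 * C / (1 - M * x)) := by
          field_simp
        rw [e]
        calc (γ * (2 * (d:ℝ)) * C * x) * (2 * C / (1 - M * x))
            ≤ ((1 - M * x) / 2) * (2 * C / (1 - M * x)) := by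
              apply mul_le_mul_of_nonneg_right hγ2 (by positivity)
          _ = C := by
              field_simp
      calc (γ * (2 * (d:ℝ)) * C * (2 * C)) * ((x⁻¹) ^ n
            * ∑ m ∈ Finset.Icc 1 n, (M * x) ^ (m - 1) * x)
          ≤ (γ * (2 * (d:ℝ)) * C * (2 * C)) * ((x⁻¹) ^ n * (x / (1 - M * x))) := by
            apply mul_le_mul_of_nonneg_left _ hA
            apply mul_le_mul_of_nonneg_left hgeom (by positivity)
        _ = ((γ * (2 * (d:ℝ)) * C * (2 * C)) * (x / (1 - M * x))) * (x⁻¹) ^ n := by ring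
        _ ≤ C * (x⁻¹) ^ n := by
            apply mul_le_mul_of_nonneg_right h3 (by positivity)
    have hCM : C * M ^ n ≤ C * (x⁻¹) ^ n := by
      apply mul_le_mul_of_nonneg_left _ (by linarith)
      exact pow_le_pow_left₀ hM.le hMle n
    calc C * M ^ n + _ ≤ C * (x⁻¹) ^ n + C * (x⁻¹) ^ n := add_le_add hCM hfinal2
      _ = 2 * C * (x⁻¹) ^ n := by ring


lemma limsup_nonneg_of_nonneg {u : ℕ → ℝ} (h : ∀ n, 0 ≤ u n) :
    0 ≤ limsup u atTop := by
  rw [Filter.limsup_eq]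
  apply Real.sInf_nonneg
  intro a ha
  obtain ⟨n, hn⟩ := ha.exists
  exact le_trans (h n) hn

lemma rpow_inv_tendsto {K : ℝ} (hK : 0 < K) :
    Tendsto (fun n : ℕ => K ^ ((n:ℝ)⁻¹)) atTop (𝓝 1) := by
  have h1 : Tendsto (fun n : ℕ => Real.log K * (n:ℝ)⁻¹) atTop (𝓝 0) := by
    simpa using (tendsto_inv_atTop_nhds_zero_nat (𝕜 := ℝ)).const_mul (Real.log K)
  have h2 := (Real.continuous_exp.tendsto 0).comp h1
  simp only [Function.comp_def, Real.exp_zero] at h2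
  refine h2.congr fun n => ?_
  rw [Real.rpow_def_of_pos hK]

lemma limsup_rpow_le_of_geom {w : ℕ → ℝ} {K Λ : ℝ} (hK : 0 < K) (hΛ : 0 < Λ)
    (hw0 : ∀ n, 0 ≤ w n) (hwK : ∀ n, w n ≤ K * Λ ^ n) :
    limsup (fun n : ℕ => (w n) ^ ((n:ℝ)⁻¹)) atTop ≤ Λ := by
  have hb : ∀ᶠ n : ℕ in atTop, (w n) ^ ((n:ℝ)⁻¹) ≤ K ^ ((n:ℝ)⁻¹) * Λ := by
    filter_upwards [eventually_ge_atTop 1] with n hn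
    have hn0 : ((n:ℝ)) ≠ 0 := by positivity
    have h1 : (w n) ^ ((n:ℝ)⁻¹) ≤ (K * Λ ^ n) ^ ((n:ℝ)⁻¹) :=
      Real.rpow_le_rpow (hw0 n) (hwK n) (by positivity)
    refine h1.trans (le_of_eq ?_)
    rw [Real.mul_rpow hK.le (by positivity)]
    congr 1
    rw [← Real.rpow_natCast Λ n, ← Real.rpow_mul hΛ.le]
    rw [mul_inv_cancel₀ hn0, Real.rpow_one]
  have htend : Tendsto (fun n : ℕ => K ^ ((n:ℝ)⁻¹) * Λ) atTop (𝓝 (1 * Λ)) :=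
    (rpow_inv_tendsto hK).mul_const Λ
  have hlimsup : limsup (fun n : ℕ => K ^ ((n:ℝ)⁻¹) * Λ) atTop = 1 * Λ :=
    htend.limsup_eq
  calc limsup (fun n : ℕ => (w n) ^ ((n:ℝ)⁻¹)) atTop
      ≤ limsup (fun n : ℕ => K ^ ((n:ℝ)⁻¹) * Λ) atTop := by
        exact limsup_le_limsup hb
          (Filter.IsBoundedUnder.isCoboundedUnder_le
            (Filter.isBoundedUnder_of ⟨0, fun n => Real.rpow_nonneg (hw0 n) _⟩))
          htend.isBoundedUnder_le
    _ = Λ := by rw [hlimsup, one_mul]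


open MeasureTheory in
lemma wTot_nonneg (d : ℕ) (δ : ℝ) (hδ : δ ≤ 1) (n : ℕ) (g ρ : ℝ) :
    0 ≤ wTot d δ n g ρ := by
  apply mul_nonneg
  · apply pow_nonneg
    apply div_nonneg (by linarith) (by positivity)
  · apply Finset.sum_nonneg
    intro s _
    exact Finset.prod_nonneg fun v _ => F_nonneg g ρ _

lemma csaw_pos {d : ℕ} (hd : 1 ≤ d) (n : ℕ) : 1 ≤ csaw d n := by
  have hd0 : 0 < d := hd
  apply Finset.card_pos.2
  refine ⟨fun _ => ((⟨0, hd0⟩ : Fin d), true), ?_⟩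
  rw [Finset.mem_filter]
  refine ⟨Finset.mem_univ _, ?_⟩
  have hval : ∀ k : Fin (n+1),
      walkPos (fun _ : Fin n => ((⟨0, hd0⟩ : Fin d), true)) k ⟨0, hd0⟩
        = ((Finset.univ.filter (fun i : Fin n => (i:ℕ) < (k:ℕ))).card : ℤ) := by
    intro k
    unfold walkPos stepVec
    rw [Finset.sum_apply]
    simp
  intro k k' hkk
  by_contra hne
  have hcards : ((Finset.univ.filter (fun i : Fin n => (i:ℕ) < (k:ℕ))).card : ℤ)
      = ((Finset.univ.filter (fun i : Fin n => (i:ℕ) < (k':ℕ))).card : ℤ) := by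
    rw [← hval k, ← hval k', hkk]
  have hkey : ∀ (u v : Fin (n+1)), u.1 < v.1 →
      (Finset.univ.filter (fun i : Fin n => (i:ℕ) < (u:ℕ))).card
        < (Finset.univ.filter (fun i : Fin n => (i:ℕ) < (v:ℕ))).card := by
    intro u v huv
    apply Finset.card_lt_card
    rw [Finset.ssubset_iff_of_subset]
    · refine ⟨⟨u.1, by have := v.2; omega⟩, ?_, ?_⟩
      · simp only [Finset.mem_filter, Finset.mem_univ, true_and]
        exact huv
      · simp only [Finset.mem_filter, Finset.mem_univ, true_and, not_lt]
        omega
    · intro i hi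
      simp only [Finset.mem_filter, Finset.mem_univ, true_and] at hi ⊢
      omega
  rcases Nat.lt_or_ge k.1 k'.1 with h | h
  · have := hkey k k' h
    omega
  · have hlt : k'.1 < k.1 := by
      rcases Nat.lt_or_ge k'.1 k.1 with h2 | h2
      · exact h2
      · exact absurd (Fin.ext (le_antisymm h2 h)) hne
    have := hkey k' k hlt
    omega

open MeasureTheory in
lemma wTot_le_geom {d : ℕ} {δ g ρ C M x : ℝ} (hδ1 : δ ≤ 1)
    (hg : 1 ≤ g) (hρ : 1 ≤ ρ)
    (hC : 1 ≤ C) (hM : 0 < M) (hx : 0 < x) (hMx : M * x < 1)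
    (hcs : ∀ m : ℕ, (csaw d m : ℝ) ≤ C * M ^ m)
    (hγ1 : Real.sqrt Real.pi * Real.exp (-((ρ - 1) / (2 * Real.sqrt g)) ^ 2
        + (ρ - 1) / (2 * Real.sqrt g) + 9/4) ≤ 1)
    (hγ2 : Real.sqrt Real.pi * Real.exp (-((ρ - 1) / (2 * Real.sqrt g)) ^ 2
        + (ρ - 1) / (2 * Real.sqrt g) + 9/4) * (2 * (d:ℝ)) * C * x ≤ (1 - M * x) / 2)
    (n : ℕ) :
    wTot d δ n g ρ ≤ (F g ρ 1 * (2 * C)) * (((1 - δ) / (2 * (d:ℝ))) * F g ρ 1 * x⁻¹) ^ n := by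
  set γ : ℝ := Real.sqrt Real.pi * Real.exp (-((ρ - 1) / (2 * Real.sqrt g)) ^ 2
      + (ρ - 1) / (2 * Real.sqrt g) + 9/4) with hγdef
  have hγ0 : 0 ≤ γ := by positivity
  have hg0 : (0:ℝ) < g := by linarith
  have hF1pos : 0 < F g ρ 1 :=
    lt_of_lt_of_le (by positivity) (F_one_ge hg hρ)
  have hsum : ∑ s : Fin n → Fin d × Bool, ∏ v ∈ walkRange s, F g ρ (visits s v)
      ≤ F g ρ 1 ^ (n + 1) * awt d n γ := by
    rw [awt, Finset.mul_sum]
    apply Finset.sum_le_sum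
    intro s _
    exact prod_F_le s (F g ρ) (F g ρ 1) γ (F_nonneg g ρ) hF1pos.le hγ0
      (fun m hm => F_le_main hg hρ m hm)
  have hawt : awt d n γ ≤ 2 * C * (x⁻¹) ^ n :=
    awt_le hγ0 hγ1 hC hM hx hMx hcs hγ2 n
  have hq : (0:ℝ) ≤ ((1 - δ) / (2 * (d:ℝ))) := by
    apply div_nonneg (by linarith) (by positivity)
  calc wTot d δ n g ρ
      ≤ ((1 - δ) / (2 * (d:ℝ))) ^ n * (F g ρ 1 ^ (n + 1) * (2 * C * (x⁻¹) ^ n)) := by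
        rw [wTot]
        apply mul_le_mul_of_nonneg_left _ (pow_nonneg hq n)
        refine hsum.trans ?_
        exact mul_le_mul_of_nonneg_left hawt (by positivity)
    _ = (F g ρ 1 * (2 * C)) * (((1 - δ) / (2 * (d:ℝ))) * F g ρ 1 * x⁻¹) ^ n := by
        rw [mul_pow, mul_pow, pow_succ]
        ring

/-- with `μ(g,ρ) = limsup_n w_n(g,ρ)^{1/n}` and
`z = (2d)⁻¹(1-δ) p √π`, one has `limsup_{g→∞} μ(g,ρ(g)) ≤ z μ`, where `μ` is the
connective constant of the self-avoiding walk. -/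
theorem limsup_growth_rate_le (d : ℕ) (hd : 1 ≤ d) (δ : ℝ) (hδ : δ ∈ Set.Ioo (0 : ℝ) 1)
    (p : ℝ) (hp : 0 < p) (muSAW : ℝ)
    (hmuSAW : Tendsto (fun n : ℕ => ((csaw d n : ℝ)) ^ ((n : ℝ)⁻¹)) atTop (𝓝 muSAW))
    (ρ : ℝ → ℝ)
    (hα : Tendsto (fun g : ℝ => (ρ g - 1) / (2 * Real.sqrt g)) atTop atTop)
    (hlim : Tendsto (fun g : ℝ =>
        g ^ (-(1 : ℝ) / 2) * Real.exp (((ρ g - 1) / (2 * Real.sqrt g)) ^ 2)) atTop (𝓝 p))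
    (z : ℝ) (hz : z = (2 * d : ℝ)⁻¹ * (1 - δ) * p * Real.sqrt Real.pi) :
    limsup (fun g : ℝ =>
        limsup (fun n : ℕ => (wTot d δ n g (ρ g)) ^ ((n : ℝ)⁻¹)) atTop) atTop
      ≤ z * muSAW := by
  obtain ⟨hδ0, hδ1⟩ := hδ
  have hd0 : (0:ℝ) < (d:ℝ) := by exact_mod_cast hd
  have hπ0 : (0:ℝ) < Real.sqrt Real.pi := Real.sqrt_pos.2 Real.pi_pos
  have hHnn : ∀ g : ℝ,
      0 ≤ limsup (fun n : ℕ => (wTot d δ n g (ρ g)) ^ ((n : ℝ)⁻¹)) atTop := by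
    intro g
    apply limsup_nonneg_of_nonneg
    intro n
    exact Real.rpow_nonneg (wTot_nonneg d δ hδ1.le n g (ρ g)) _
  have hmu1 : (1:ℝ) ≤ muSAW := by
    apply ge_of_tendsto hmuSAW
    filter_upwards [eventually_ge_atTop 1] with n hn
    have h1 : (1:ℝ) ≤ (csaw d n : ℝ) := by exact_mod_cast csaw_pos hd n
    calc (1:ℝ) = 1 ^ ((n:ℝ)⁻¹) := (Real.one_rpow _).symm
      _ ≤ (csaw d n : ℝ) ^ ((n:ℝ)⁻¹) := Real.rpow_le_rpow zero_le_one h1 (by positivity)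
  have hc0 : (0:ℝ) < (1 - δ) / (2*(d:ℝ)) * Real.sqrt Real.pi * p := by
    have h1 : (0:ℝ) < 1 - δ := by linarith
    positivity
  apply le_of_forall_pos_le_add
  intro η hη
  set ε : ℝ := η / ((1 - δ) / (2*(d:ℝ)) * Real.sqrt Real.pi * p) with hεdef
  have hε : 0 < ε := div_pos hη hc0
  set M : ℝ := muSAW + ε/2 with hMdef
  set x : ℝ := (muSAW + ε)⁻¹ with hxdef
  have hM0 : 0 < M := by rw [hMdef]; linarith
  have hM1 : 1 ≤ M := by rw [hMdef]; linarith
  have hx0 : 0 < x := by rw [hxdef]; exact inv_pos.2 (by linarith)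
  have hMx : M * x < 1 := by
    rw [hxdef, ← div_eq_mul_inv, div_lt_one (by linarith)]
    rw [hMdef]
    linarith
  obtain ⟨N, hN⟩ := eventually_atTop.1
    (hmuSAW.eventually (eventually_le_nhds (show muSAW < M by rw [hMdef]; linarith)))
  set C : ℝ := 1 + ∑ m ∈ Finset.range (N+1), (csaw d m : ℝ) with hCdef
  have hsumnn : 0 ≤ ∑ m ∈ Finset.range (N+1), (csaw d m : ℝ) :=
    Finset.sum_nonneg (fun m _ => by positivity)
  have hC1 : 1 ≤ C := by rw [hCdef]; linarith
  have hC0 : 0 < C := by linarith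
  have hcs : ∀ m : ℕ, (csaw d m : ℝ) ≤ C * M ^ m := by
    intro m
    rcases Nat.lt_or_ge m (N+1) with hm | hm
    · have h1 : (csaw d m : ℝ) ≤ ∑ j ∈ Finset.range (N+1), (csaw d j : ℝ) :=
        Finset.single_le_sum (f := fun j => (csaw d j : ℝ)) (fun j _ => by positivity) (Finset.mem_range.2 hm)
      have h2 : (1:ℝ) ≤ M ^ m := one_le_pow₀ hM1
      nlinarith
    · have h3 := hN m (by omega)
      have hcnn : (0:ℝ) ≤ (csaw d m : ℝ) := by positivity
      have hm0 : ((m:ℝ)) ≠ 0 := by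
        have : 1 ≤ m := by omega
        positivity
      have h4 : ((csaw d m : ℝ) ^ ((m:ℝ)⁻¹)) ^ m ≤ M ^ m :=
        pow_le_pow_left₀ (Real.rpow_nonneg hcnn _) h3 m
      have h5 : ((csaw d m : ℝ) ^ ((m:ℝ)⁻¹)) ^ m = (csaw d m : ℝ) := by
        rw [← Real.rpow_natCast ((csaw d m : ℝ) ^ ((m:ℝ)⁻¹)) m, ← Real.rpow_mul hcnn]
        rw [inv_mul_cancel₀ hm0, Real.rpow_one]
      rw [h5] at h4
      calc (csaw d m : ℝ) ≤ M ^ m := h4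
        _ ≤ C * M ^ m := le_mul_of_one_le_left (by positivity) hC1
  set γf : ℝ → ℝ := fun g => Real.sqrt Real.pi *
      Real.exp (-((ρ g - 1) / (2 * Real.sqrt g)) ^ 2 + (ρ g - 1) / (2 * Real.sqrt g) + 9/4)
    with hγfdef
  have hγfnn : ∀ g, 0 ≤ γf g := fun g => by positivity
  have hγtend : Tendsto γf atTop (𝓝 0) := by
    have h1 : Tendsto (fun a : ℝ => Real.sqrt Real.pi * Real.exp (-a^2 + a + 9/4))
        atTop (𝓝 0) := by
      have h2 : Tendsto (fun a : ℝ => -a + 9/4) atTop atBot := by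
        apply Filter.tendsto_atBot_add_const_right
        exact tendsto_neg_atTop_atBot
      have h3 : Tendsto (fun a : ℝ => -a^2 + a + 9/4) atTop atBot := by
        apply tendsto_atBot_mono' atTop _ h2
        filter_upwards [eventually_ge_atTop (2:ℝ)] with a ha
        nlinarith
      have h4 := Real.tendsto_exp_atBot.comp h3
      have h5 := h4.const_mul (Real.sqrt Real.pi)
      simpa [Function.comp_def] using h5
    have := h1.comp hα
    simpa [Function.comp_def] using this
  have hρev : ∀ᶠ g : ℝ in atTop, 1 ≤ ρ g := by
    filter_upwards [hα.eventually_ge_atTop 0, eventually_ge_atTop (1:ℝ)] with g h0 h1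
    have hsg : (0:ℝ) < 2 * Real.sqrt g := by
      have : (0:ℝ) < Real.sqrt g := Real.sqrt_pos.2 (by linarith)
      linarith
    rcases div_nonneg_iff.1 h0 with ⟨hnum, _⟩ | ⟨_, hden⟩
    · linarith
    · linarith
  have hγ1ev : ∀ᶠ g in atTop, γf g ≤ 1 := hγtend.eventually (eventually_le_nhds one_pos)
  have h1Mx : (0:ℝ) < 1 - M * x := by linarith
  have hγ2ev : ∀ᶠ g in atTop, γf g * (2*(d:ℝ)) * C * x ≤ (1 - M * x)/2 := by
    have hpos : (0:ℝ) < (1 - M * x)/2 / ((2*(d:ℝ)) * C * x) := by positivity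
    filter_upwards [hγtend.eventually (eventually_le_nhds hpos)] with g hg1
    rw [le_div_iff₀ (by positivity)] at hg1
    calc γf g * (2*(d:ℝ)) * C * x = γf g * ((2*(d:ℝ)) * C * x) := by ring
      _ ≤ (1 - M * x)/2 := hg1
  have hmain : ∀ᶠ g : ℝ in atTop,
      limsup (fun n : ℕ => (wTot d δ n g (ρ g)) ^ ((n : ℝ)⁻¹)) atTop
        ≤ (1 - δ) / (2*(d:ℝ)) * Real.sqrt Real.pi *
            (g ^ (-(1:ℝ)/2) * Real.exp (((ρ g - 1) / (2 * Real.sqrt g)) ^ 2)) * (muSAW + ε) := by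
    filter_upwards [eventually_ge_atTop (1:ℝ), hρev, hγ1ev, hγ2ev] with g hg1 hρ1 hγ1 hγ2
    have hg0 : (0:ℝ) < g := by linarith
    have hF1pos : 0 < F g (ρ g) 1 := by
      refine lt_of_lt_of_le ?_ (F_one_ge hg1 hρ1)
      have : (0:ℝ) < Real.sqrt g := Real.sqrt_pos.2 hg0
      positivity
    have hK : 0 < F g (ρ g) 1 * (2 * C) := by positivity
    have hΛ : 0 < ((1 - δ) / (2*(d:ℝ))) * F g (ρ g) 1 * x⁻¹ := by
      have h1 : (0:ℝ) < 1 - δ := by linarith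
      positivity
    have hinner := limsup_rpow_le_of_geom hK hΛ
      (fun n => wTot_nonneg d δ hδ1.le n g (ρ g))
      (fun n => wTot_le_geom hδ1.le hg1 hρ1 hC1 hM0 hx0 hMx hcs hγ1 hγ2 n)
    refine hinner.trans ?_
    have hF1le := F_one_le (ρ := ρ g) hg0
    have hxinv : x⁻¹ = muSAW + ε := by rw [hxdef, inv_inv]
    have hrpow : (Real.sqrt g)⁻¹ = g ^ (-(1:ℝ)/2) := by
      rw [show (-(1:ℝ)/2) = -((1:ℝ)/2) by ring, Real.rpow_neg hg0.le, ← Real.sqrt_eq_rpow]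
    calc ((1 - δ) / (2*(d:ℝ))) * F g (ρ g) 1 * x⁻¹
        ≤ ((1 - δ) / (2*(d:ℝ))) * (Real.sqrt Real.pi * (Real.sqrt g)⁻¹ *
            Real.exp (((ρ g - 1) / (2 * Real.sqrt g)) ^ 2)) * x⁻¹ := by
          apply mul_le_mul_of_nonneg_right _ (by positivity)
          apply mul_le_mul_of_nonneg_left hF1le
          apply div_nonneg (by linarith) (by positivity)
      _ = (1 - δ) / (2*(d:ℝ)) * Real.sqrt Real.pi *
            (g ^ (-(1:ℝ)/2) * Real.exp (((ρ g - 1) / (2 * Real.sqrt g)) ^ 2)) * (muSAW + ε) := by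
          rw [hxinv, ← hrpow]
          ring
  have hΨtend : Tendsto (fun g : ℝ =>
      (1 - δ) / (2*(d:ℝ)) * Real.sqrt Real.pi *
        (g ^ (-(1:ℝ)/2) * Real.exp (((ρ g - 1) / (2 * Real.sqrt g)) ^ 2)) * (muSAW + ε))
      atTop (𝓝 ((1 - δ) / (2*(d:ℝ)) * Real.sqrt Real.pi * p * (muSAW + ε))) := by
    exact (hlim.const_mul ((1 - δ) / (2*(d:ℝ)) * Real.sqrt Real.pi)).mul_const (muSAW + ε)
  have houter := limsup_le_limsup hmain
      (Filter.IsBoundedUnder.isCoboundedUnder_le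
        (Filter.isBoundedUnder_of ⟨0, fun g => hHnn g⟩))
      hΨtend.isBoundedUnder_le
  rw [hΨtend.limsup_eq] at houter
  refine houter.trans (le_of_eq ?_)
  have hA : (1 - δ) / (2*(d:ℝ)) * Real.sqrt Real.pi * p * ε = η := by
    rw [hεdef, ← mul_div_assoc, div_eq_iff (ne_of_gt hc0)]
    ring
  have hAz : (1 - δ) / (2*(d:ℝ)) * Real.sqrt Real.pi * p = z := by
    rw [hz]
    ring
  calc (1 - δ) / (2*(d:ℝ)) * Real.sqrt Real.pi * p * (muSAW + ε)
      = (1 - δ) / (2*(d:ℝ)) * Real.sqrt Real.pi * p * muSAW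
        + (1 - δ) / (2*(d:ℝ)) * Real.sqrt Real.pi * p * ε := by ring
    _ = z * muSAW + η := by rw [hA, hAz]


end StrongInteraction
end
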